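/- arXiv:1102.5208 — 4 statements merged into one kernel-verified Lean document; each statement's English description precedes it below -/
import Mathlib

section
/- Let S, T be finite subsets of ℕ with 0 ∉ S ∩ T, set M = |S| + |T|, and define φ_{S,T} = |S ∩ T| + Σ_{λ' < λ in S} min(λ, λ') + Σ_{μ' < μ in T} min(μ, μ') + Σ_{λ ∈ S, μ ∈ T} min(λ, μ). Suppose |S| − |T| is odd and positive, and let n = Σ_{λ∈S} λ + Σ_{μ∈T} μ − ((M−1)/2)², with n ≥ 2. Then φ_{S,T} ≥ (M−1)(2M²−7M+15)/24, with equality if and only if the pair (S,T) is one of the five pairs ({n}, ∅), ({0,1,n}, ∅), ({0,1}, {n}), ({1,n}, {0}), ({0,n}, {1}). -/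
open Finset

/-- `φ_{S,T} = |S ∩ T| + Σ_{λ' < λ in S} min(λ,λ') + Σ_{μ' < μ in T} min(μ,μ')
  + Σ_{λ ∈ S, μ ∈ T} min(λ,μ)`. -/
def phiST (S T : Finset ℕ) : ℕ :=
  (S ∩ T).card
    + ∑ l ∈ S, ∑ l' ∈ S.filter (· < l), min l l'
    + ∑ m ∈ T, ∑ m' ∈ T.filter (· < m), min m m'
    + ∑ l ∈ S, ∑ m ∈ T, min l m

lemma sum_card_filter_lt (A : Finset ℕ) : ∑ l ∈ A, (A.filter (· < l)).card = A.card.choose 2 := by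
  induction A using Finset.induction_on_max with
  | empty => simp
  | insert a s hmax ih =>
    have ha : a ∉ s := fun h => lt_irrefl a (hmax a h)
    rw [Finset.sum_insert ha]
    have h1 : (insert a s).filter (· < a) = s := by
      rw [Finset.filter_insert, if_neg (lt_irrefl a)]
      exact Finset.filter_true_of_mem (fun x hx => hmax x hx)
    have h2 : ∀ l ∈ s, (insert a s).filter (· < l) = s.filter (· < l) := by
      intro l hl
      rw [Finset.filter_insert, if_neg (by exact not_lt.2 (hmax l hl).le)]
    rw [h1, Finset.sum_congr rfl (fun l hl => by rw [h2 l hl]), ih,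
      Finset.card_insert_of_notMem ha]
    rw [Nat.choose_succ_succ]
    simp [Nat.choose_one_right]

lemma boole_card {α : Type*} (s : Finset α) (p : α → Prop) [DecidablePred p] :
    ∑ x ∈ s, (if p x then 1 else 0) = (s.filter p).card := by
  rw [← Finset.sum_filter]; simp

lemma sum_ind (K v : ℕ) (h : v ≤ K) : ∑ t ∈ range K, (if t < v then 1 else 0) = v := by
  rw [boole_card]
  have h2 : (range K).filter (· < v) = range v := by
    ext t; simp only [mem_filter, mem_range]; omega
  simp [h2]

lemma min_as_sum {K x y : ℕ} (h : min x y ≤ K) :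
    min x y = ∑ t ∈ range K, (if t < x then 1 else 0) * (if t < y then 1 else 0) := by
  have h1 : ∀ t, (if t < x then 1 else 0) * (if t < y then 1 else 0)
      = if t < min x y then 1 else 0 := by
    intro t
    by_cases h1 : t < x <;> by_cases h2 : t < y <;> simp [h1, h2, lt_min_iff]
  rw [Finset.sum_congr rfl (fun t _ => h1 t), sum_ind K _ h]

lemma level_sum (S : Finset ℕ) (K : ℕ) (hK : ∀ l ∈ S, l ≤ K) :
    (∑ l ∈ S, ∑ l' ∈ S.filter (· < l), min l l')
      = ∑ t ∈ range K, ((S.filter (fun l => t < l)).card).choose 2 := by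
  have step1 : (∑ l ∈ S, ∑ l' ∈ S.filter (· < l), min l l')
      = ∑ l ∈ S, ∑ t ∈ range K, ∑ l' ∈ S.filter (· < l),
          (if t < l then 1 else 0) * (if t < l' then 1 else 0) := by
    refine Finset.sum_congr rfl fun l hl => ?_
    rw [← Finset.sum_comm]
    exact Finset.sum_congr rfl fun l' _ =>
      min_as_sum (le_trans (min_le_left l l') (hK l hl))
  rw [step1, Finset.sum_comm]
  refine Finset.sum_congr rfl fun t _ => ?_
  have step2 : ∀ l ∈ S, ∑ l' ∈ S.filter (· < l),
      (if t < l then 1 else 0) * (if t < l' then 1 else 0)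
      = if t < l then ((S.filter (fun x => t < x)).filter (· < l)).card else 0 := by
    intro l _
    rw [← Finset.mul_sum, boole_mul, boole_card]
    congr 1
    exact congrArg Finset.card (by ext x; simp only [Finset.mem_filter]; tauto)
  rw [Finset.sum_congr rfl step2, ← Finset.sum_filter]
  exact sum_card_filter_lt _

lemma level_cross (S T : Finset ℕ) (K : ℕ) (hK : ∀ l ∈ S, l ≤ K) :
    (∑ l ∈ S, ∑ m ∈ T, min l m)
      = ∑ t ∈ range K, (S.filter (fun l => t < l)).card * (T.filter (fun l => t < l)).card := by
  have step1 : (∑ l ∈ S, ∑ m ∈ T, min l m)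
      = ∑ l ∈ S, ∑ t ∈ range K, ∑ m ∈ T,
          (if t < l then 1 else 0) * (if t < m then 1 else 0) := by
    refine Finset.sum_congr rfl fun l hl => ?_
    rw [← Finset.sum_comm]
    exact Finset.sum_congr rfl fun m _ =>
      min_as_sum (le_trans (min_le_left l m) (hK l hl))
  rw [step1, Finset.sum_comm]
  refine Finset.sum_congr rfl fun t _ => ?_
  rw [← Finset.sum_mul_sum, boole_card, boole_card]

lemma choose_add_two (a b : ℕ) : (a+b).choose 2 = a.choose 2 + b.choose 2 + a*b := by
  induction a with
  | zero => simp
  | succ a ih =>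
    have h1 : (a+1+b) = (a+b)+1 := by omega
    rw [h1, Nat.choose_succ_succ, Nat.choose_succ_succ a, ih, Nat.choose_one_right,
      Nat.choose_one_right]
    ring

lemma two_choose (k : ℕ) : (2*(k+1)).choose 2 = (k+1)*(2*k+1) := by
  rw [Nat.choose_two_right]
  have h1 : 2*(k+1) - 1 = 2*k+1 := by omega
  rw [h1]
  have h2 : 2*(k+1) * (2*k+1) = 2 * ((k+1)*(2*k+1)) := by ring
  rw [h2, Nat.mul_div_cancel_left _ two_pos]

lemma sumC (m : ℕ) : 6 * ∑ t ∈ Finset.range m, (2*(t+1)).choose 2 + m*(m+1) = 4*m*m*(m+1) := by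
  induction m with
  | zero => simp
  | succ m ih =>
    rw [Finset.sum_range_succ, two_choose]
    zify at ih ⊢
    linear_combination ih

lemma low_count (S T : Finset ℕ) (h0 : 0 ∉ S ∩ T) (t : ℕ) :
    (S.filter (fun l => ¬ t < l)).card + (T.filter (fun l => ¬ t < l)).card ≤ 2*t+1 := by
  have key : ∀ X : Finset ℕ, (X.filter (fun l => ¬ t < l)).card ≤ t+1 := by
    intro X
    calc (X.filter (fun l => ¬ t < l)).card ≤ (range (t+1)).card :=
          Finset.card_le_card (fun x hx => by
            simp only [mem_filter] at hx; simp only [mem_range]; omega)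
      _ = t+1 := card_range _
  have key0 : ∀ X : Finset ℕ, 0 ∉ X → (X.filter (fun l => ¬ t < l)).card ≤ t := by
    intro X hX
    calc (X.filter (fun l => ¬ t < l)).card ≤ ((range (t+1)).erase 0).card :=
          Finset.card_le_card (fun x hx => by
            simp only [mem_filter] at hx
            refine Finset.mem_erase.2 ⟨fun h => hX (h ▸ hx.1), ?_⟩
            simp only [mem_range]; omega)
      _ = t := by rw [Finset.card_erase_of_mem (by simp), card_range]; omega
  by_cases h : 0 ∈ T
  · have h0S : 0 ∉ S := fun hS0 => h0 (Finset.mem_inter.2 ⟨hS0, h⟩)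
    have := key0 S h0S
    have := key T
    omega
  · have := key0 T h
    have := key S
    omega

lemma key_bound (S T : Finset ℕ) (h0 : 0 ∉ S ∩ T) (m : ℕ) (hM : S.card + T.card = 2*m+1) :
    4*m*m*(m+1) ≤ 6 * phiST S T + m*(m+1) := by
  set K := (∑ l ∈ S, l) + (∑ l ∈ T, l) + m + 1 with hKdef
  have hKS : ∀ l ∈ S, l ≤ K := by
    intro l hl
    have h : l ≤ ∑ x ∈ S, x :=
      Finset.single_le_sum (f := fun i => i) (fun _ _ => Nat.zero_le _) hl
    omega
  have hKT : ∀ l ∈ T, l ≤ K := by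
    intro l hl
    have h : l ≤ ∑ x ∈ T, x :=
      Finset.single_le_sum (f := fun i => i) (fun _ _ => Nat.zero_le _) hl
    omega
  have hphi : (∑ t ∈ range K,
      (((S.filter (fun l => t < l)).card + (T.filter (fun l => t < l)).card).choose 2))
      ≤ phiST S T := by
    have hsplit : ∀ t : ℕ,
        (((S.filter (fun l => t < l)).card + (T.filter (fun l => t < l)).card).choose 2)
        = ((S.filter (fun l => t < l)).card).choose 2
          + ((T.filter (fun l => t < l)).card).choose 2
          + (S.filter (fun l => t < l)).card * (T.filter (fun l => t < l)).card :=
      fun t => choose_add_two _ _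
    rw [Finset.sum_congr rfl (fun t _ => hsplit t)]
    rw [Finset.sum_add_distrib, Finset.sum_add_distrib]
    unfold phiST
    rw [level_sum S K hKS, level_sum T K hKT, level_cross S T K hKS]
    omega
  have hterm : ∀ t ∈ range m, (2*(m-t)).choose 2
      ≤ ((S.filter (fun l => t < l)).card + (T.filter (fun l => t < l)).card).choose 2 := by
    intro t _
    apply Nat.choose_le_choose
    have h1 := Finset.card_filter_add_card_filter_not (s := S) (p := fun l => t < l)
    have h2 := Finset.card_filter_add_card_filter_not (s := T) (p := fun l => t < l)
    have h3 := low_count S T h0 t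
    omega
  have hs1 : ∑ t ∈ range m, (2*(m-t)).choose 2 ≤ phiST S T := by
    refine le_trans (Finset.sum_le_sum hterm) (le_trans ?_ hphi)
    exact Finset.sum_le_sum_of_subset (Finset.range_subset_range.2 (by omega))
  have hs2 : 6 * ∑ t ∈ range m, (2*(m-t)).choose 2 + m*(m+1) = 4*m*m*(m+1) := by
    have hre : ∑ t ∈ range m, (2*(m-t)).choose 2 = ∑ t ∈ range m, (2*(t+1)).choose 2 := by
      rw [← Finset.sum_range_reflect (fun t => (2*(t+1)).choose 2) m]
      refine Finset.sum_congr rfl fun t ht => ?_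
      have : t < m := Finset.mem_range.1 ht
      congr 2
      omega
    rw [hre, sumC]
  calc 4*m*m*(m+1) = 6 * ∑ t ∈ range m, (2*(m-t)).choose 2 + m*(m+1) := hs2.symm
    _ ≤ 6 * phiST S T + m*(m+1) := Nat.add_le_add_right (Nat.mul_le_mul_left 6 hs1) _

lemma sorted2 (S : Finset ℕ) (h : S.card = 2) : ∃ x y, x < y ∧ S = {x, y} := by
  obtain ⟨a, b, hab, rfl⟩ := Finset.card_eq_two.1 h
  rcases hab.lt_or_gt with h1 | h1
  · exact ⟨a, b, h1, rfl⟩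
  · exact ⟨b, a, h1, by ext w; simp [Finset.mem_insert]; tauto⟩

lemma sorted3 (S : Finset ℕ) (h : S.card = 3) : ∃ x y z, x < y ∧ y < z ∧ S = {x, y, z} := by
  obtain ⟨a, b, c, hab, hac, hbc, rfl⟩ := Finset.card_eq_three.1 h
  rcases hab.lt_or_gt with h1 | h1 <;> rcases hac.lt_or_gt with h2 | h2 <;>
    rcases hbc.lt_or_gt with h3 | h3
  · exact ⟨a, b, c, h1, h3, rfl⟩
  · exact ⟨a, c, b, h2, h3, by ext w; simp [Finset.mem_insert]; tauto⟩
  · omega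
  · exact ⟨c, a, b, h2, h1, by ext w; simp [Finset.mem_insert]; tauto⟩
  · exact ⟨b, a, c, h1, h2, by ext w; simp [Finset.mem_insert]; tauto⟩
  · omega
  · exact ⟨b, c, a, h3, h2, by ext w; simp [Finset.mem_insert]; tauto⟩
  · exact ⟨c, b, a, h3, h1, by ext w; simp [Finset.mem_insert]; tauto⟩

lemma phi3 (x y z : ℕ) (hxy : x < y) (hyz : y < z) :
    phiST {x, y, z} ∅ = 2*x + y := by
  have h1 : ¬ x < x := by omega
  have h2 : ¬ y < y := by omega
  have h3 : ¬ z < z := by omega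
  have h4 : ¬ y < x := by omega
  have h5 : ¬ z < x := by omega
  have h6 : ¬ z < y := by omega
  have h7 : ¬ x = y := by omega
  have h8 : ¬ x = z := by omega
  have h9 : ¬ y = z := by omega
  simp [phiST, Finset.sum_insert, Finset.filter_insert, Finset.filter_singleton,
    Finset.mem_insert, Finset.mem_singleton, hxy, hyz, lt_trans hxy hyz, *]
  omega

lemma phi2 (x y w : ℕ) (hxy : x < y) :
    phiST {x, y} {w} = (if w = x ∨ w = y then 1 else 0) + x + min x w + min y w := by
  have h1 : ¬ x < x := by omega
  have h2 : ¬ y < y := by omega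
  have h3 : ¬ y < x := by omega
  have h7 : ¬ x = y := by omega
  simp [phiST, Finset.sum_insert, Finset.filter_insert, Finset.filter_singleton,
    Finset.mem_insert, Finset.mem_singleton, Finset.inter_singleton, hxy, *]
  by_cases hw : w = x ∨ w = y
  · rw [if_pos hw, if_pos hw]; simp; omega
  · rw [if_neg hw, if_neg hw]; simp; omega

lemma phi_01n (n : ℕ) (hn : 2 ≤ n) : phiST {0, 1, n} ∅ = 1 := by
  have h1 : (0:ℕ) ≠ 1 := by omega
  have h2 : ¬ (0:ℕ) = n := by omega
  have h3 : ¬ (1:ℕ) = n := by omega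
  have h4 : (0:ℕ) < n := by omega
  have h5 : (1:ℕ) < n := by omega
  have h6 : ¬ (n:ℕ) < n := by omega
  have h7 : ¬ (n:ℕ) = 0 := by omega
  have h8 : ¬ (n:ℕ) = 1 := by omega
  simp [phiST, Finset.sum_insert, Finset.filter_insert, Finset.filter_singleton,
    Finset.mem_insert, Finset.mem_singleton, Finset.inter_singleton, *]
  omega

lemma phi_01_n (n : ℕ) (hn : 2 ≤ n) : phiST {0, 1} {n} = 1 := by
  have h1 : (0:ℕ) ≠ 1 := by omega
  have h2 : ¬ (0:ℕ) = n := by omega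
  have h3 : ¬ (1:ℕ) = n := by omega
  have h4 : (0:ℕ) < n := by omega
  have h5 : (1:ℕ) < n := by omega
  have h6 : ¬ (n:ℕ) < n := by omega
  have h7 : ¬ (n:ℕ) = 0 := by omega
  have h8 : ¬ (n:ℕ) = 1 := by omega
  simp [phiST, Finset.sum_insert, Finset.filter_insert, Finset.filter_singleton,
    Finset.mem_insert, Finset.mem_singleton, Finset.inter_singleton, *]
  omega

lemma phi_1n_0 (n : ℕ) (hn : 2 ≤ n) : phiST {1, n} {0} = 1 := by
  have h2 : ¬ (0:ℕ) = n := by omega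
  have h3 : ¬ (1:ℕ) = n := by omega
  have h4 : (0:ℕ) < n := by omega
  have h5 : (1:ℕ) < n := by omega
  have h6 : ¬ (n:ℕ) < n := by omega
  have h7 : ¬ (n:ℕ) = 0 := by omega
  have h8 : ¬ (n:ℕ) = 1 := by omega
  have h9 : ¬ (0:ℕ) = 1 := by omega
  simp [phiST, Finset.sum_insert, Finset.filter_insert, Finset.filter_singleton,
    Finset.mem_insert, Finset.mem_singleton, Finset.inter_singleton, *]
  omega

lemma phi_0n_1 (n : ℕ) (hn : 2 ≤ n) : phiST {0, n} {1} = 1 := by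
  have h2 : ¬ (0:ℕ) = n := by omega
  have h3 : ¬ (1:ℕ) = n := by omega
  have h4 : (0:ℕ) < n := by omega
  have h5 : (1:ℕ) < n := by omega
  have h6 : ¬ (n:ℕ) < n := by omega
  have h7 : ¬ (n:ℕ) = 0 := by omega
  have h8 : ¬ (n:ℕ) = 1 := by omega
  have h9 : ¬ (1:ℕ) = 0 := by omega
  simp [phiST, Finset.sum_insert, Finset.filter_insert, Finset.filter_singleton,
    Finset.mem_insert, Finset.mem_singleton, Finset.inter_singleton, *]
  omega

/-- Let `S, T ⊆ ℕ` be finite with `0 ∉ S ∩ T`, `M = |S| + |T|`, `|S| − |T|` odd and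
positive, and `n = Σ_{λ∈S} λ + Σ_{μ∈T} μ − ((M−1)/2)²` with `n ≥ 2`. Then
`φ_{S,T} ≥ (M−1)(2M²−7M+15)/24`, with equality iff `(S,T)` is one of the five pairs
`({n},∅)`, `({0,1,n},∅)`, `({0,1},{n})`, `({1,n},{0})`, `({0,n},{1})`. -/
theorem stmt_0 (S T : Finset ℕ) (h0 : 0 ∉ S ∩ T) (M n : ℕ)
    (hM : M = S.card + T.card)
    (hpos : T.card < S.card) (hodd : Odd (S.card - T.card))
    (hn : (∑ l ∈ S, l) + (∑ m ∈ T, m) = n + ((M - 1) / 2) ^ 2)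
    (hn2 : 2 ≤ n) :
    ((M : ℚ) - 1) * (2 * (M : ℚ) ^ 2 - 7 * (M : ℚ) + 15) / 24 ≤ (phiST S T : ℚ)
      ∧ ((phiST S T : ℚ)
          = ((M : ℚ) - 1) * (2 * (M : ℚ) ^ 2 - 7 * (M : ℚ) + 15) / 24
        ↔ (S = {n} ∧ T = ∅) ∨ (S = {0, 1, n} ∧ T = ∅) ∨ (S = {0, 1} ∧ T = {n})
            ∨ (S = {1, n} ∧ T = {0}) ∨ (S = {0, n} ∧ T = {1})) := by
  obtain ⟨k, hk⟩ := hodd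
  obtain ⟨m, hm⟩ : ∃ m, S.card + T.card = 2*m+1 := ⟨T.card + k, by omega⟩
  have hMm : M = 2*m+1 := by omega
  have hn' : (∑ l ∈ S, l) + (∑ x ∈ T, x) = n + m*m := by
    have h1 : (M-1)/2 = m := by omega
    rw [h1, pow_two] at hn
    exact hn
  have hkey := key_bound S T h0 m hm
  have hMQ : (M:ℚ) = 2*(m:ℚ)+1 := by rw [hMm]; push_cast; ring
  have hfq : ((M:ℚ)-1)*(2*(M:ℚ)^2-7*(M:ℚ)+15)/24 = ((m:ℚ)*(4*(m:ℚ)^2-3*(m:ℚ)+5))/6 := by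
    rw [hMQ]; ring
  have hcast : (4*(m:ℚ)*(m:ℚ)*((m:ℚ)+1)) ≤ 6 * (phiST S T : ℚ) + (m:ℚ)*((m:ℚ)+1) := by
    exact_mod_cast hkey
  have hmge : (0:ℚ) ≤ (m:ℚ)*((m:ℚ)-1) := by
    rcases Nat.eq_zero_or_pos m with h | h
    · simp [h]
    · have h1 : (1:ℚ) ≤ (m:ℚ) := by exact_mod_cast h
      nlinarith
  have hle : ((M:ℚ)-1)*(2*(M:ℚ)^2-7*(M:ℚ)+15)/24 ≤ (phiST S T : ℚ) := by
    rw [hfq]; nlinarith [hcast, hmge]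
  refine ⟨hle, ?_⟩
  rcases m with _ | _ | m2
  -- Case m = 0 : M = 1
  · have hT : T = ∅ := Finset.card_eq_zero.1 (by omega)
    obtain ⟨x, hS⟩ := Finset.card_eq_one.1 (show S.card = 1 by omega)
    have hxn : x = n := by
      rw [hS, hT] at hn'
      simp at hn'
      omega
    have hphi : phiST S T = 0 := by
      rw [hS, hT]
      simp [phiST]
    constructor
    · intro _
      exact Or.inl ⟨by rw [hS, hxn], hT⟩
    · intro _
      rw [hphi, hMm]
      norm_num
  -- Case m = 1 : M = 3
  · constructor
    · intro heq
      have hphi1 : phiST S T = 1 := by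
        have h1 : (phiST S T : ℚ) = 1 := by rw [heq, hMm]; norm_num
        exact_mod_cast h1
      rcases (by omega : T.card = 0 ∧ S.card = 3 ∨ T.card = 1 ∧ S.card = 2) with
        ⟨hb, ha⟩ | ⟨hb, ha⟩
      · -- T = ∅, |S| = 3
        have hT : T = ∅ := Finset.card_eq_zero.1 hb
        obtain ⟨x, y, z, hxy, hyz, hS⟩ := sorted3 S ha
        have hsum : x + y + z = n + 1 := by
          rw [hS, hT] at hn'
          rw [Finset.sum_insert (by simp; omega), Finset.sum_insert (by simp; omega),
            Finset.sum_singleton] at hn'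
          simp at hn'
          omega
        rw [hS, hT, phi3 x y z hxy hyz] at hphi1
        have hxyz : x = 0 ∧ y = 1 ∧ z = n := by omega
        obtain ⟨rfl, rfl, rfl⟩ := hxyz
        exact Or.inr (Or.inl ⟨hS, hT⟩)
      · -- |T| = 1, |S| = 2
        obtain ⟨w, hT⟩ := Finset.card_eq_one.1 hb
        obtain ⟨x, y, hxy, hS⟩ := sorted2 S ha
        have hsum : x + y + w = n + 1 := by
          rw [hS, hT] at hn'
          rw [Finset.sum_insert (by simp; omega), Finset.sum_singleton,
            Finset.sum_singleton] at hn'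
          omega
        have h0' : ¬ ((0 = x ∨ 0 = y) ∧ 0 = w) := by
          intro ⟨ha1, ha2⟩
          apply h0
          rw [hS, hT]
          simp only [Finset.mem_inter, Finset.mem_insert, Finset.mem_singleton]
          exact ⟨ha1, ha2⟩
        rw [hS, hT, phi2 x y w hxy] at hphi1
        by_cases hw : w = x ∨ w = y
        · rw [if_pos hw] at hphi1
          exfalso
          omega
        · rw [if_neg hw] at hphi1
          have hcases : (x = 0 ∧ y = 1 ∧ w = n) ∨ (x = 1 ∧ y = n ∧ w = 0)
              ∨ (x = 0 ∧ y = n ∧ w = 1) := by omega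
          rcases hcases with ⟨rfl, rfl, rfl⟩ | ⟨rfl, rfl, rfl⟩ | ⟨rfl, rfl, rfl⟩
          · exact Or.inr (Or.inr (Or.inl ⟨hS, hT⟩))
          · exact Or.inr (Or.inr (Or.inr (Or.inl ⟨hS, hT⟩)))
          · exact Or.inr (Or.inr (Or.inr (Or.inr ⟨hS, hT⟩)))
    · intro hcase
      have hval : phiST S T = 1 := by
        rcases hcase with ⟨hS, hT⟩ | ⟨hS, hT⟩ | ⟨hS, hT⟩ | ⟨hS, hT⟩ | ⟨hS, hT⟩
        · exfalso
          rw [hS, hT] at hm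
          simp at hm
        · rw [hS, hT]; exact phi_01n n hn2
        · rw [hS, hT]; exact phi_01_n n hn2
        · rw [hS, hT]; exact phi_1n_0 n hn2
        · rw [hS, hT]; exact phi_0n_1 n hn2
      rw [hval, hMm]
      norm_num
  -- Case m ≥ 2
  · have hstrict : ((M:ℚ)-1)*(2*(M:ℚ)^2-7*(M:ℚ)+15)/24 < (phiST S T : ℚ) := by
      rw [hfq]
      have h2m : (2:ℚ) ≤ ((m2+1+1 : ℕ) : ℚ) := by push_cast; linarith [Nat.cast_nonneg (α := ℚ) m2]
      nlinarith [hcast, h2m]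
    constructor
    · intro heq
      exact absurd heq.symm (ne_of_lt hstrict)
    · intro hcase
      exfalso
      have hc1 : ¬ (0:ℕ) = 1 := by omega
      have hc2 : ¬ (0:ℕ) = n := by omega
      have hc3 : ¬ (1:ℕ) = n := by omega
      have hc4 : ¬ (1:ℕ) = 0 := by omega
      rcases hcase with ⟨hS, hT⟩ | ⟨hS, hT⟩ | ⟨hS, hT⟩ | ⟨hS, hT⟩ | ⟨hS, hT⟩ <;>
        · rw [hS, hT] at hm
          simp [Finset.card_insert_of_notMem, Finset.mem_insert, Finset.mem_singleton,
            hc1, hc2, hc3, hc4] at hm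
          try omega
end

section
/- Let n ≥ 2 and 0 ≤ m < n be integers. The number of monic self-dual polynomials f ∈ 𝔽₂[X] of degree 2n (i.e. f monic, f(0) = 1, and coefficient of X^i equal to coefficient of X^{2n−i} for all i) such that the multiplicity of the factor (X − 1) in f is exactly 2m, is 2^{n−m−1}. -/
open Polynomial Finset

namespace Stmt8Aux

/-- coefficient pattern of the self-dual "core" polynomial of degree `2k`. -/
def aFun (k : ℕ) (v : Fin (k-1) → ZMod 2) (i : ℕ) : ZMod 2 :=
  if i = 0 ∨ i = k ∨ i = 2*k then 1
  else if h : 1 ≤ i ∧ i ≤ k - 1 then v ⟨i - 1, by omega⟩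
  else if h : k + 1 ≤ i ∧ i ≤ 2*k - 1 then v ⟨2*k - i - 1, by omega⟩
  else 0

lemma aFun_symm (k : ℕ) (v : Fin (k-1) → ZMod 2) (i : ℕ) (hi : i ≤ 2*k) :
    aFun k v (2*k - i) = aFun k v i := by
  unfold aFun
  split_ifs with h1 h2 h3 h4 h5 h6 h7 h8 h9 <;>
    first
      | rfl
      | omega
      | (exact congrArg v (Fin.ext (by simp only [Fin.val_mk]; omega)))

lemma aFun_zero (k : ℕ) (v : Fin (k-1) → ZMod 2) : aFun k v 0 = 1 := by
  simp [aFun]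

lemma aFun_k (k : ℕ) (v : Fin (k-1) → ZMod 2) : aFun k v k = 1 := by
  simp [aFun]

lemma aFun_top (k : ℕ) (v : Fin (k-1) → ZMod 2) : aFun k v (2*k) = 1 := by
  simp [aFun]

lemma aFun_mid (k : ℕ) (v : Fin (k-1) → ZMod 2) (j : ℕ) (h1 : 1 ≤ j) (h2 : j ≤ k - 1) :
    aFun k v j = v ⟨j - 1, by omega⟩ := by
  unfold aFun
  rw [if_neg (by omega), dif_pos ⟨h1, h2⟩]

lemma aFun_high (k : ℕ) (v : Fin (k-1) → ZMod 2) (j : ℕ) (h : 2*k < j) :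
    aFun k v j = 0 := by
  unfold aFun
  rw [if_neg (by omega), dif_neg (by omega), dif_neg (by omega)]

/-- the self-dual core polynomial. -/
noncomputable def gPoly (k : ℕ) (v : Fin (k-1) → ZMod 2) : Polynomial (ZMod 2) :=
  ∑ i ∈ Finset.range (2*k+1), Polynomial.C (aFun k v i) * Polynomial.X ^ i

lemma gPoly_coeff (k : ℕ) (v : Fin (k-1) → ZMod 2) (j : ℕ) :
    (gPoly k v).coeff j = aFun k v j := by
  unfold gPoly
  rw [Polynomial.finset_sum_coeff]
  simp only [Polynomial.coeff_C_mul, Polynomial.coeff_X_pow, mul_ite, mul_one, mul_zero]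
  rw [Finset.sum_ite_eq (Finset.range (2*k+1)) j (aFun k v)]
  by_cases hj : j ∈ Finset.range (2*k+1)
  · rw [if_pos hj]
  · rw [if_neg hj, aFun_high k v j (by simpa using hj)]

lemma gPoly_natDegree (k : ℕ) (v : Fin (k-1) → ZMod 2) :
    (gPoly k v).natDegree = 2*k := by
  apply le_antisymm
  · rw [Polynomial.natDegree_le_iff_coeff_eq_zero]
    intro j hj
    rw [gPoly_coeff, aFun_high k v j hj]
  · apply Polynomial.le_natDegree_of_ne_zero
    rw [gPoly_coeff, aFun_top]
    exact one_ne_zero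

lemma gPoly_monic (k : ℕ) (v : Fin (k-1) → ZMod 2) : (gPoly k v).Monic := by
  rw [Polynomial.Monic, Polynomial.leadingCoeff, gPoly_natDegree, gPoly_coeff, aFun_top]

/-- sum over symmetric sequence of length `2k+1` in `ZMod 2` equals middle term. -/
lemma sum_symm_eq_middle (k : ℕ) (c : ℕ → ZMod 2)
    (hsym : ∀ i ≤ 2*k, c (2*k - i) = c i) :
    ∑ i ∈ Finset.range (2*k+1), c i = c k := by
  have hk : k ∈ Finset.range (2*k+1) := by simp; omega
  rw [← Finset.add_sum_erase _ c hk]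
  have h0 : ∑ i ∈ (Finset.range (2*k+1)).erase k, c i = 0 := by
    apply Finset.sum_involution (fun i _ => 2*k - i)
    · intro a ha
      simp only [Finset.mem_erase, Finset.mem_range] at ha
      rw [hsym a (by omega)]
      exact CharTwo.add_self_eq_zero _
    · intro a ha _
      simp only [Finset.mem_erase, Finset.mem_range] at ha
      omega
    · intro a ha
      simp only [Finset.mem_erase, Finset.mem_range] at ha ⊢
      omega
    · intro a ha
      simp only [Finset.mem_erase, Finset.mem_range] at ha
      omega
  rw [h0, add_zero]

lemma gPoly_eval_one (k : ℕ) (v : Fin (k-1) → ZMod 2) : (gPoly k v).eval 1 = 1 := by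
  unfold gPoly
  rw [Polynomial.eval_finset_sum]
  simp only [Polynomial.eval_mul, Polynomial.eval_C, Polynomial.eval_pow, Polynomial.eval_X,
    one_pow, mul_one]
  rw [sum_symm_eq_middle k (aFun k v) (aFun_symm k v), aFun_k]

lemma selfdual_iff {F : Polynomial (ZMod 2)} {N : ℕ} (hd : F.natDegree = N) :
    (∀ i ≤ N, F.coeff i = F.coeff (N - i)) ↔ F.reverse = F := by
  constructor
  · intro h
    ext j
    rw [Polynomial.coeff_reverse, hd]
    by_cases hj : j ≤ N
    · rw [Polynomial.revAt_le hj]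
      exact (h j hj).symm
    · rw [Polynomial.revAt_eq_self_of_lt (by omega)]
  · intro h i hi
    conv_rhs => rw [← h]
    rw [Polynomial.coeff_reverse, hd, Polynomial.revAt_le (by omega : N - i ≤ N)]
    congr 1
    omega

lemma X_sub_C_one : (X - C 1 : Polynomial (ZMod 2)) = X + 1 := by
  rw [sub_eq_add_neg, ← C_neg, show (-1 : ZMod 2) = 1 from by decide, C_1]

lemma reverse_X_add_one : (X + 1 : Polynomial (ZMod 2)).reverse = X + 1 := by
  have hd : (X + 1 : Polynomial (ZMod 2)).natDegree = 1 := by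
    rw [show (1 : Polynomial (ZMod 2)) = C 1 by simp]
    exact Polynomial.natDegree_X_add_C 1
  ext j
  rw [Polynomial.coeff_reverse, hd]
  match j with
  | 0 => rw [Polynomial.revAt_le (by omega)]; simp [Polynomial.coeff_one, Polynomial.coeff_X]
  | 1 => rw [Polynomial.revAt_le (by omega)]; simp [Polynomial.coeff_one, Polynomial.coeff_X]
  | (j+2) => rw [Polynomial.revAt_eq_self_of_lt (by omega)]

lemma reverse_X_add_one_pow (j : ℕ) :
    ((X + 1 : Polynomial (ZMod 2)) ^ j).reverse = (X + 1) ^ j := by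
  induction j with
  | zero => rw [pow_zero, show (1 : Polynomial (ZMod 2)) = C 1 from (map_one C).symm,
      Polynomial.reverse_C]
  | succ j ih => rw [pow_succ, Polynomial.reverse_mul_of_domain, ih, reverse_X_add_one]

lemma monic_pXp (j : ℕ) : ((X + 1 : Polynomial (ZMod 2)) ^ j).Monic := by
  have : (X + 1 : Polynomial (ZMod 2)).Monic := by
    rw [show (1 : Polynomial (ZMod 2)) = C 1 by simp]
    exact Polynomial.monic_X_add_C 1
  exact this.pow j

lemma natDegree_pXp (j : ℕ) : ((X + 1 : Polynomial (ZMod 2)) ^ j).natDegree = j := by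
  rw [Polynomial.natDegree_pow, show (1 : Polynomial (ZMod 2)) = C 1 by simp,
    Polynomial.natDegree_X_add_C, mul_one]

lemma coeff_zero_pXp (j : ℕ) : ((X + 1 : Polynomial (ZMod 2)) ^ j).coeff 0 = 1 := by
  rw [Polynomial.coeff_zero_eq_eval_zero]
  simp

lemma rootMult_pXp (j : ℕ) :
    ((X + 1 : Polynomial (ZMod 2)) ^ j).rootMultiplicity 1 = j := by
  rw [← X_sub_C_one]
  exact Polynomial.rootMultiplicity_X_sub_C_pow 1 j

end Stmt8Aux

open Stmt8Aux

/-- Let `n ≥ 2` and `0 ≤ m < n`. The number of monic self-dual polynomials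
`f ∈ 𝔽₂[X]` of degree `2n` (monic, `f(0) = 1`, and the coefficient of `X^i` equal
to the coefficient of `X^{2n−i}` for all `i`) such that the multiplicity of the
factor `X − 1` in `f` is exactly `2m`, is `2^{n−m−1}`. -/
theorem stmt_8 (n m : ℕ) (hn : 2 ≤ n) (hm : m < n) :
    Nat.card {f : Polynomial (ZMod 2) //
        f.Monic ∧ f.natDegree = 2 * n ∧ f.coeff 0 = 1
          ∧ (∀ i ≤ 2 * n, f.coeff i = f.coeff (2 * n - i))
          ∧ f.rootMultiplicity 1 = 2 * m}
      = 2 ^ (n - m - 1) := by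
  set k := n - m with hkdef
  have hk1 : 1 ≤ k := by omega
  have hnm : 2 * n = 2 * m + 2 * k := by omega
  set p : Polynomial (ZMod 2) := (X + 1) ^ (2 * m) with hp
  have hpm : p.Monic := monic_pXp _
  have hp0 : p ≠ 0 := hpm.ne_zero
  have hpd : p.natDegree = 2 * m := natDegree_pXp _
  have hpc0 : p.coeff 0 = 1 := coeff_zero_pXp _
  have hprev : p.reverse = p := reverse_X_add_one_pow _
  have hpmult : p.rootMultiplicity 1 = 2 * m := rootMult_pXp _
  -- the parametrization
  set F : (Fin (k-1) → ZMod 2) → Polynomial (ZMod 2) := fun v => p * gPoly k v with hF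
  have hFprop : ∀ v, (F v).Monic ∧ (F v).natDegree = 2 * n ∧ (F v).coeff 0 = 1
      ∧ (∀ i ≤ 2 * n, (F v).coeff i = (F v).coeff (2 * n - i))
      ∧ (F v).rootMultiplicity 1 = 2 * m := by
    intro v
    have hgm := gPoly_monic k v
    have hmonic : (F v).Monic := hpm.mul hgm
    have hdeg : (F v).natDegree = 2 * n := by
      rw [hF]
      simp only
      rw [Polynomial.natDegree_mul hp0 hgm.ne_zero, hpd, gPoly_natDegree]
      omega
    refine ⟨hmonic, hdeg, ?_, ?_, ?_⟩
    · rw [hF]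
      simp only
      rw [Polynomial.mul_coeff_zero, hpc0, gPoly_coeff, aFun_zero, one_mul]
    · rw [selfdual_iff hdeg, hF]
      simp only
      rw [Polynomial.reverse_mul_of_domain, hprev,
        (selfdual_iff (gPoly_natDegree k v)).mp
          (fun i hi => (by rw [gPoly_coeff, gPoly_coeff, aFun_symm k v i hi]))]
    · rw [hF]
      simp only
      rw [Polynomial.rootMultiplicity_mul (mul_ne_zero hp0 hgm.ne_zero), hpmult,
        Polynomial.rootMultiplicity_eq_zero, add_zero]
      intro hroot
      have := gPoly_eval_one k v
      rw [Polynomial.IsRoot] at hroot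
      rw [hroot] at this
      exact zero_ne_one this
  set S := {f : Polynomial (ZMod 2) //
        f.Monic ∧ f.natDegree = 2 * n ∧ f.coeff 0 = 1
          ∧ (∀ i ≤ 2 * n, f.coeff i = f.coeff (2 * n - i))
          ∧ f.rootMultiplicity 1 = 2 * m} with hS
  set F' : (Fin (k-1) → ZMod 2) → S := fun v => ⟨F v, hFprop v⟩ with hF'
  have hinj : Function.Injective F' := by
    intro v w h
    have h1 : F v = F w := congrArg Subtype.val h
    have h2 : gPoly k v = gPoly k w := mul_left_cancel₀ hp0 h1
    funext i
    have h3 : (gPoly k v).coeff (i.val + 1) = (gPoly k w).coeff (i.val + 1) := by rw [h2]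
    have hilt : (i : ℕ) < k - 1 := i.isLt
    rw [gPoly_coeff, gPoly_coeff,
      aFun_mid k v (i.val + 1) (by omega) (by omega),
      aFun_mid k w (i.val + 1) (by omega) (by omega)] at h3
    simpa using h3
  have hsurj : Function.Surjective F' := by
    rintro ⟨f, hmonic, hdeg, hc0, hsym, hmult⟩
    have hf0 : f ≠ 0 := hmonic.ne_zero
    obtain ⟨q, hq⟩ : p ∣ f := by
      rw [hp, ← X_sub_C_one, ← hmult]
      exact Polynomial.pow_rootMultiplicity_dvd f 1
    have hq0 : q ≠ 0 := by
      rintro rfl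
      rw [mul_zero] at hq
      exact hf0 hq
    have hqmult : q.rootMultiplicity 1 = 0 := by
      rw [hq, Polynomial.rootMultiplicity_mul (hq ▸ hf0), hpmult] at hmult
      omega
    have hqe1 : q.eval 1 = 1 := by
      have hne : q.eval 1 ≠ 0 := by
        intro h0
        have := (Polynomial.rootMultiplicity_pos hq0).mpr h0
        omega
      revert hne
      generalize q.eval 1 = x
      revert x
      decide
    have hqmonic : q.Monic := hpm.of_mul_monic_left (hq ▸ hmonic)
    have hqdeg : q.natDegree = 2 * k := by
      rw [hq, Polynomial.natDegree_mul hp0 hq0, hpd] at hdeg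
      omega
    have hqc0 : q.coeff 0 = 1 := by
      rw [hq, Polynomial.mul_coeff_zero, hpc0, one_mul] at hc0
      exact hc0
    have hqrev : q.reverse = q := by
      have hrev : f.reverse = f := (selfdual_iff hdeg).mp hsym
      rw [hq, Polynomial.reverse_mul_of_domain, hprev] at hrev
      exact mul_left_cancel₀ hp0 hrev
    have hqsym : ∀ i ≤ 2 * k, q.coeff i = q.coeff (2 * k - i) :=
      (selfdual_iff hqdeg).mpr hqrev
    have hqck : q.coeff k = 1 := by
      have he : q.eval 1 = ∑ i ∈ Finset.range (2*k+1), q.coeff i := by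
        rw [Polynomial.eval_eq_sum_range, hqdeg]
        simp
      rw [he, sum_symm_eq_middle k q.coeff
        (fun i hi => (hqsym i hi).symm)] at hqe1
      exact hqe1
    refine ⟨fun i => q.coeff (i.val + 1), ?_⟩
    apply Subtype.ext
    show p * gPoly k (fun i => q.coeff (i.val + 1)) = f
    rw [hq]
    congr 1
    ext j
    rw [gPoly_coeff]
    unfold aFun
    split_ifs with h1 h2 h3
    · rcases h1 with rfl | rfl | rfl
      · exact hqc0.symm
      · exact hqck.symm
      · rw [← hqdeg]
        exact hqmonic.coeff_natDegree.symm
    · show q.coeff (j - 1 + 1) = q.coeff j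
      congr 1
      omega
    · show q.coeff (2*k - j - 1 + 1) = q.coeff j
      have h4 := hqsym (2*k - j) (by omega)
      rw [show 2*k - (2*k - j) = j by omega] at h4
      rw [show 2*k - j - 1 + 1 = 2*k - j by omega]
      exact h4
    · refine (Polynomial.coeff_eq_zero_of_natDegree_lt ?_).symm
      rw [hqdeg]
      omega
  have hcard : Nat.card (Fin (k-1) → ZMod 2) = Nat.card S :=
    Nat.card_congr (Equiv.ofBijective F' ⟨hinj, hsurj⟩)
  rw [← hcard]
  rw [Nat.card_eq_fintype_card, Fintype.card_fun]
  simp [ZMod.card]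
end

section
/- Let n ≥ 2, let J be the n × n antidiagonal identity matrix over 𝔽₂, and let U be the subgroup of G = Sp_{2n}(𝔽₂) = {u ∈ GL_{2n}(𝔽₂) : uᵀ·[[0,J],[J,0]]·u = [[0,J],[J,0]]} consisting of all block matrices [[x, x·s·J], [0, J·(xᵀ)^{-1}·J]] with x upper triangular unipotent and s symmetric of size n over 𝔽₂. Then U is self-normalizing in G, i.e. N_G(U) = U. -/
open Matrix

/-- The `n × n` antidiagonal identity matrix over `𝔽₂`: `(i,j)` entry
`δ_{i, n+1−j}` (1-indexed), i.e. `1` iff `i + j = n - 1` (0-indexed). -/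
def antidiagJ (n : ℕ) : Matrix (Fin n) (Fin n) (ZMod 2) :=
  Matrix.of fun i j => if (i : ℕ) + (j : ℕ) = n - 1 then 1 else 0

/-- The `2n × 2n` Gram matrix `[[0, J], [J, 0]]` of the symplectic form. -/
def sympForm (n : ℕ) : Matrix (Fin n ⊕ Fin n) (Fin n ⊕ Fin n) (ZMod 2) :=
  Matrix.fromBlocks 0 (antidiagJ n) (antidiagJ n) 0

abbrev Mat2n (n : ℕ) := Matrix (Fin n ⊕ Fin n) (Fin n ⊕ Fin n) (ZMod 2)

/-- `Sp_{2n}(𝔽₂)` as the subgroup of `GL_{2n}(𝔽₂)` of matrices `u` with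
`uᵀ·[[0,J],[J,0]]·u = [[0,J],[J,0]]`. -/
def Sp (n : ℕ) : Subgroup (Mat2n n)ˣ where
  carrier := {u | (u : Mat2n n)ᵀ * sympForm n * (u : Mat2n n) = sympForm n}
  one_mem' := by simp
  mul_mem' := by
    intro a b ha hb
    simp only [Set.mem_setOf_eq] at *
    have h : (b : Mat2n n)ᵀ * ((a : Mat2n n)ᵀ * sympForm n * (a : Mat2n n)) * (b : Mat2n n)
        = sympForm n := by rw [ha]; exact hb
    simpa [Units.val_mul, Matrix.transpose_mul, Matrix.mul_assoc] using h
  inv_mem' := by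
    intro a ha
    simp only [Set.mem_setOf_eq] at *
    have key : ((a : Mat2n n) * ((a⁻¹ : (Mat2n n)ˣ) : Mat2n n))ᵀ * sympForm n *
        ((a : Mat2n n) * ((a⁻¹ : (Mat2n n)ˣ) : Mat2n n))
        = ((a⁻¹ : (Mat2n n)ˣ) : Mat2n n)ᵀ *
          ((a : Mat2n n)ᵀ * sympForm n * (a : Mat2n n)) * ((a⁻¹ : (Mat2n n)ˣ) : Mat2n n) := by
      simp only [Matrix.transpose_mul, Matrix.mul_assoc]
    rw [Units.mul_inv, ha] at key
    simpa using key.symm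

/-- Upper triangular unipotent `n × n` matrices over `𝔽₂`. -/
def uniTri (n : ℕ) : Set (Matrix (Fin n) (Fin n) (ZMod 2)) :=
  {x | (∀ i, x i i = 1) ∧ ∀ i j : Fin n, (j : ℕ) < (i : ℕ) → x i j = 0}

/-- The block matrix `[[x, x·s·J], [0, J·(xᵀ)⁻¹·J]]`. -/
noncomputable def uBlock (n : ℕ) (x s : Matrix (Fin n) (Fin n) (ZMod 2)) :
    Matrix (Fin n ⊕ Fin n) (Fin n ⊕ Fin n) (ZMod 2) :=
  Matrix.fromBlocks x (x * s * antidiagJ n) 0 (antidiagJ n * (xᵀ)⁻¹ * antidiagJ n)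

/-- The set `U` of block matrices `[[x, x·s·J], [0, J·(xᵀ)⁻¹·J]]` with `x` upper
triangular unipotent and `s` symmetric. -/
def uSet (n : ℕ) : Set (Matrix (Fin n ⊕ Fin n) (Fin n ⊕ Fin n) (ZMod 2)) :=
  {u | ∃ x ∈ uniTri n, ∃ s, sᵀ = s ∧ u = uBlock n x s}


section Helpers
variable {n : ℕ}

lemma antidiagJ_apply (i j : Fin n) :
    antidiagJ n i j = if j = i.rev then 1 else 0 := by
  have hi := i.isLt; have hj := j.isLt
  have : ((i : ℕ) + (j : ℕ) = n - 1) ↔ j = i.rev := by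
    rw [Fin.ext_iff, Fin.val_rev]; omega
  simp [antidiagJ, this]

lemma antidiagJ_apply' (i j : Fin n) :
    antidiagJ n i j = if i = j.rev then 1 else 0 := by
  rw [antidiagJ_apply]
  congr 1
  simp only [eq_iff_iff]
  constructor <;> intro h <;> subst h <;> simp [Fin.rev_rev]

lemma J_mul_apply (A : Matrix (Fin n) (Fin n) (ZMod 2)) (i j : Fin n) :
    (antidiagJ n * A) i j = A i.rev j := by
  rw [mul_apply]
  have h : ∀ x : Fin n, i = x.rev ↔ x = i.rev := by
    intro x; constructor <;> intro h <;> subst h <;> simp [Fin.rev_rev]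
  simp [antidiagJ_apply', ite_mul, h, Finset.sum_ite_eq']

lemma mul_J_apply (A : Matrix (Fin n) (Fin n) (ZMod 2)) (i j : Fin n) :
    (A * antidiagJ n) i j = A i j.rev := by
  rw [mul_apply]
  have h : ∀ x : Fin n, j = x.rev ↔ x = j.rev := by
    intro x; constructor <;> intro h <;> subst h <;> simp [Fin.rev_rev]
  simp [antidiagJ_apply, mul_ite, h, Finset.sum_ite_eq']

lemma J_mul_J : antidiagJ n * antidiagJ n = 1 := by
  ext i j
  rw [J_mul_apply, antidiagJ_apply, one_apply]
  simp [Fin.rev_rev, eq_comm]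

lemma antidiagJ_transpose : (antidiagJ n)ᵀ = antidiagJ n := by
  ext i j
  simp [transpose_apply, antidiagJ, Nat.add_comm]

lemma matrix_add_self {m k : Type*} (A : Matrix m k (ZMod 2)) : A + A = 0 := by
  ext i j
  exact CharTwo.add_self_eq_zero _

end Helpers


section Chunk2
variable {n : ℕ}

lemma uniTri_blockTriangular {x : Matrix (Fin n) (Fin n) (ZMod 2)} (hx : x ∈ uniTri n) :
    x.BlockTriangular id := fun i j h => hx.2 i j h

lemma uniTri_det {x : Matrix (Fin n) (Fin n) (ZMod 2)} (hx : x ∈ uniTri n) :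
    IsUnit x.det := by
  rw [Matrix.det_of_upperTriangular (uniTri_blockTriangular hx)]
  simp [hx.1]

lemma uniTri_inv {x : Matrix (Fin n) (Fin n) (ZMod 2)} (hx : x ∈ uniTri n) :
    x⁻¹ ∈ uniTri n := by
  have : Invertible x := Matrix.invertibleOfIsUnitDet x (uniTri_det hx)
  have htri : x⁻¹.BlockTriangular id :=
    Matrix.blockTriangular_inv_of_blockTriangular (uniTri_blockTriangular hx)
  refine ⟨fun i => ?_, fun i j h => htri h⟩
  have h1 : (x * x⁻¹) i i = 1 := by
    rw [Matrix.mul_nonsing_inv x (uniTri_det hx)]; simp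
  rw [mul_apply] at h1
  rw [Finset.sum_eq_single_of_mem i (Finset.mem_univ i) ?_] at h1
  · rwa [hx.1 i, one_mul] at h1
  · intro k _ hk
    rcases lt_or_gt_of_ne (fun h => hk (Fin.ext h) : (k : ℕ) ≠ (i : ℕ)) with h | h
    · rw [hx.2 i k h, zero_mul]
    · rw [htri (show (id i : Fin n) < id k from h), mul_zero]

/-- position of a coordinate in the ordered basis `e₁,…,eₙ,f₁,…,fₙ`. -/
def idx (n : ℕ) : Fin n ⊕ Fin n → ℕ := Sum.elim Fin.val (fun i => n + (i : ℕ))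

lemma uSet_diag {M : Mat2n n} (hM : M ∈ uSet n) : ∀ p, M p p = 1 := by
  obtain ⟨x, hx, s, hs, rfl⟩ := hM
  have hxi := uniTri_inv hx
  rintro (i | i)
  · exact hx.1 i
  · show (antidiagJ n * (xᵀ)⁻¹ * antidiagJ n) i i = 1
    rw [mul_J_apply, J_mul_apply, ← Matrix.transpose_nonsing_inv, transpose_apply]
    exact hxi.1 _

lemma uSet_tri {M : Mat2n n} (hM : M ∈ uSet n) :
    ∀ p q, idx n q < idx n p → M p q = 0 := by
  obtain ⟨x, hx, s, hs, rfl⟩ := hM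
  have hxi := uniTri_inv hx
  rintro (i | i) (j | j) h <;>
    simp only [idx, Sum.elim_inl, Sum.elim_inr] at h
  · exact hx.2 i j h
  · exact absurd h (by omega)
  · show (0 : Matrix (Fin n) (Fin n) (ZMod 2)) i j = 0
    simp
  · show (antidiagJ n * (xᵀ)⁻¹ * antidiagJ n) i j = 0
    rw [mul_J_apply, J_mul_apply, ← Matrix.transpose_nonsing_inv, transpose_apply]
    refine hxi.2 _ _ ?_
    have hi := i.isLt; have hj := j.isLt
    rw [Fin.val_rev, Fin.val_rev]; omega

lemma J_J_cancel (A : Matrix (Fin n) (Fin n) (ZMod 2)) :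
    antidiagJ n * (antidiagJ n * A) = A := by
  rw [← Matrix.mul_assoc, J_mul_J, Matrix.one_mul]

lemma uSet_sp {M : Mat2n n} (hM : M ∈ uSet n) :
    Mᵀ * sympForm n * M = sympForm n := by
  obtain ⟨x, hx, s, hs, rfl⟩ := hM
  have hdet : IsUnit x.det := uniTri_det hx
  have hdetT : IsUnit xᵀ.det := by rwa [Matrix.det_transpose]
  have c1 : ∀ B : Matrix (Fin n) (Fin n) (ZMod 2), xᵀ * (x⁻¹ᵀ * B) = B := by
    intro B; rw [Matrix.transpose_nonsing_inv]
    exact Matrix.mul_nonsing_inv_cancel_left _ _ hdetT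
  have c2 : ∀ B : Matrix (Fin n) (Fin n) (ZMod 2), x⁻¹ * (x * B) = B :=
    fun B => Matrix.nonsing_inv_mul_cancel_left _ _ hdet
  have c3 : x⁻¹ * x = 1 := Matrix.nonsing_inv_mul _ hdet
  unfold uBlock sympForm
  rw [fromBlocks_transpose, fromBlocks_multiply, fromBlocks_multiply, fromBlocks_inj]
  refine ⟨?_, ?_, ?_, ?_⟩ <;>
    simp only [Matrix.transpose_zero, Matrix.mul_zero, Matrix.zero_mul, add_zero, zero_add,
      antidiagJ_transpose, ← Matrix.transpose_nonsing_inv, Matrix.transpose_transpose, hs,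
      Matrix.transpose_mul, J_mul_J, Matrix.mul_one, Matrix.one_mul, Matrix.mul_assoc,
      J_J_cancel, c1, c2, c3, matrix_add_self]

end Chunk2


section Chunk3
variable {n : ℕ}

lemma stdBM_transpose (a b : Fin n) :
    (single a b (1 : ZMod 2))ᵀ = single b a 1 := by
  ext i j
  simp [single, transpose_apply, and_comm]

lemma J_stdBM_J (a b : Fin n) :
    antidiagJ n * single a b (1 : ZMod 2) * antidiagJ n
      = single a.rev b.rev 1 := by
  ext i j
  rw [mul_J_apply, J_mul_apply]
  have h1 : (a = i.rev) ↔ (a.rev = i) :=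
    ⟨fun h => by subst h; simp [Fin.rev_rev], fun h => by subst h; simp [Fin.rev_rev]⟩
  have h2 : (b = j.rev) ↔ (b.rev = j) :=
    ⟨fun h => by subst h; simp [Fin.rev_rev], fun h => by subst h; simp [Fin.rev_rev]⟩
  simp [single, h1, h2]

lemma fromBlocks_zero' : (fromBlocks 0 0 0 0 : Mat2n n) = 0 := by
  ext (a | a) (b | b) <;> simp

/-- The root element attached to a pair `i < j` (simple root in the `x`-part). -/
def root1 (i j : Fin n) : Mat2n n :=
  1 + fromBlocks (single i j 1) 0 0 (single j.rev i.rev 1)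

lemma root1_sq (i j : Fin n) (hij : i ≠ j) : root1 i j * root1 i j = 1 := by
  have hN : (fromBlocks (single i j (1 : ZMod 2)) 0 0
      (single j.rev i.rev 1)) * (fromBlocks (single i j 1) 0 0
      (single j.rev i.rev 1)) = 0 := by
    rw [fromBlocks_multiply,
      Matrix.single_mul_single_of_ne (h := Ne.symm hij),
      Matrix.single_mul_single_of_ne
        (h := show i.rev ≠ j.rev from fun h => hij (Fin.rev_injective h))]
    simpa using fromBlocks_zero'
  rw [root1]
  set N := fromBlocks (single i j (1 : ZMod 2)) 0 0
    (single j.rev i.rev 1) with hNdef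
  have expand : (1 + N) * (1 + N) = 1 + (N + N) + N * N := by noncomm_ring
  rw [expand, hN, matrix_add_self, add_zero, add_zero]

lemma root1_mem (i j : Fin n) (hij : (i : ℕ) < (j : ℕ)) : root1 i j ∈ uSet n := by
  have hij' : i ≠ j := fun h => by simp [h] at hij
  refine ⟨1 + single i j 1, ⟨fun k => ?_, fun k l hkl => ?_⟩, 0, by simp, ?_⟩
  · have h : ¬(i = k ∧ j = k) := fun h => hij' (h.1.trans h.2.symm)
    simp [Matrix.add_apply, Matrix.one_apply_eq, single, h]
  · have h : ¬(i = k ∧ j = l) := by rintro ⟨rfl, rfl⟩; omega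
    have h' : k ≠ l := fun h => by omega
    simp [Matrix.add_apply, Matrix.one_apply_ne h', single, h]
  · have hx2 : (1 + single i j (1 : ZMod 2)) * (1 + single i j 1) = 1 := by
      have expand : (1 + single i j (1 : ZMod 2)) * (1 + single i j 1)
          = 1 + (single i j 1 + single i j 1)
            + single i j 1 * single i j 1 := by noncomm_ring
      rw [expand, Matrix.single_mul_single_of_ne (h := Ne.symm hij'), matrix_add_self,
        add_zero, add_zero]
    have hinv : (1 + single i j (1 : ZMod 2))⁻¹ = 1 + single i j 1 :=
      Matrix.inv_eq_right_inv hx2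
    have hD : antidiagJ n * ((1 + single i j (1 : ZMod 2))ᵀ)⁻¹ * antidiagJ n
        = 1 + single j.rev i.rev 1 := by
      rw [← Matrix.transpose_nonsing_inv, hinv, Matrix.transpose_add, Matrix.transpose_one,
        stdBM_transpose, Matrix.mul_add, Matrix.mul_one, Matrix.add_mul, J_stdBM_J, J_mul_J]
    rw [uBlock, hD]
    rw [root1, Matrix.mul_zero, Matrix.zero_mul, ← fromBlocks_one, fromBlocks_add]
    simp

lemma root1_action (i j : Fin n) (w : Fin n ⊕ Fin n → ZMod 2) :
    (root1 i j *ᵥ w - w) (Sum.inl i) = w (Sum.inl j)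
    ∧ (root1 i j *ᵥ w - w) (Sum.inr j.rev) = w (Sum.inr i.rev) := by
  have h0 : root1 i j *ᵥ w - w = (fromBlocks (single i j 1) 0 0
      (single j.rev i.rev 1)) *ᵥ w := by
    rw [root1, Matrix.add_mulVec, Matrix.one_mulVec]
    abel
  rw [h0]
  constructor
  · rw [Matrix.mulVec, dotProduct, Fintype.sum_sum_type]
    simp [single, ite_and]
  · rw [Matrix.mulVec, dotProduct, Fintype.sum_sum_type]
    simp [single, ite_and]

/-- The root element attached to the long simple root. -/
def root2 (hn : 0 < n) : Mat2n n :=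
  1 + fromBlocks 0 (single ⟨n - 1, by omega⟩ ⟨0, hn⟩ 1) 0 0

lemma root2_sq (hn : 0 < n) : root2 hn * root2 hn = 1 := by
  rw [root2]
  set N : Mat2n n := fromBlocks 0 (single ⟨n - 1, by omega⟩ ⟨0, hn⟩ 1) 0 0
    with hNdef
  have hN : N * N = 0 := by
    rw [hNdef, fromBlocks_multiply]
    simpa using fromBlocks_zero'
  have expand : (1 + N) * (1 + N) = 1 + (N + N) + N * N := by noncomm_ring
  rw [expand, hN, matrix_add_self, add_zero, add_zero]

lemma root2_mem (hn : 0 < n) : root2 hn ∈ uSet n := by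
  refine ⟨1, ⟨fun i => by simp, fun i j h => ?_⟩,
    single ⟨n - 1, by omega⟩ ⟨n - 1, by omega⟩ 1, stdBM_transpose _ _, ?_⟩
  · have h' : i ≠ j := fun hh => by omega
    exact Matrix.one_apply_ne h'
  · have hrev : ((⟨n - 1, by omega⟩ : Fin n)).rev = ⟨0, hn⟩ := by
      apply Fin.ext
      rw [Fin.val_rev]
      show n - (n - 1 + 1) = 0
      omega
    have hsJ : single (⟨n - 1, by omega⟩ : Fin n) (⟨n - 1, by omega⟩ : Fin n)
        (1 : ZMod 2) * antidiagJ n = single ⟨n - 1, by omega⟩ ⟨0, hn⟩ 1 := by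
      ext a b
      rw [mul_J_apply]
      have : ((⟨n - 1, by omega⟩ : Fin n) = b.rev) ↔ ((⟨0, hn⟩ : Fin n) = b) := by
        rw [← hrev]
        exact ⟨fun h => by rw [h, Fin.rev_rev], fun h => by rw [← h, Fin.rev_rev]⟩
      simp [single, this]
    rw [uBlock, Matrix.transpose_one, inv_one, Matrix.mul_one, J_mul_J, Matrix.one_mul, hsJ]
    rw [root2, ← fromBlocks_one, fromBlocks_add]
    simp

lemma root2_action (hn : 0 < n) (w : Fin n ⊕ Fin n → ZMod 2) :
    (root2 hn *ᵥ w - w) (Sum.inl ⟨n - 1, by omega⟩) = w (Sum.inr ⟨0, hn⟩) := by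
  have h0 : root2 hn *ᵥ w - w = (fromBlocks 0
      ((single ⟨n - 1, by omega⟩ ⟨0, hn⟩ 1 : Matrix (Fin n) (Fin n) (ZMod 2))) 0 0)
        *ᵥ w := by
    rw [root2, Matrix.add_mulVec, Matrix.one_mulVec]
    abel
  rw [h0, Matrix.mulVec, dotProduct, Fintype.sum_sum_type]
  simp [single, ite_and]

end Chunk3


section Chunk4
variable {n : ℕ}

lemma idx_inj {p q : Fin n ⊕ Fin n} (h : idx n p = idx n q) : p = q := by
  rcases p with a | a <;> rcases q with b | b <;>
    simp only [idx, Sum.elim_inl, Sum.elim_inr] at h <;>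
    [skip; skip; skip; skip] <;>
    first
    | (congr 1; exact Fin.ext (by omega))
    | (exact absurd h (by have := a.isLt; have := b.isLt; omega))

lemma root_exists (hn : 0 < n) (p : Fin n ⊕ Fin n) (hp : 1 ≤ idx n p) :
    ∃ M : Mat2n n, M ∈ uSet n ∧ M * M = 1 ∧
      ∃ q : Fin n ⊕ Fin n, idx n q + 1 = idx n p ∧ ∀ w, (M *ᵥ w - w) q = w p := by
  rcases p with m | t
  · simp only [idx, Sum.elim_inl] at hp
    have hm := m.isLt
    refine ⟨root1 ⟨(m : ℕ) - 1, by omega⟩ m,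
      root1_mem _ _ (show (m : ℕ) - 1 < (m : ℕ) by omega),
      root1_sq _ _ (fun h => by
        have := congrArg Fin.val h
        simp only at this
        omega),
      Sum.inl ⟨(m : ℕ) - 1, by omega⟩,
      show (m : ℕ) - 1 + 1 = (m : ℕ) by omega,
      fun w => (root1_action _ _ w).1⟩
  · have ht' := t.isLt
    rcases Nat.eq_zero_or_pos (t : ℕ) with ht | ht
    · have ht0 : t = ⟨0, hn⟩ := Fin.ext ht
      refine ⟨root2 hn, root2_mem hn, root2_sq hn, Sum.inl ⟨n - 1, by omega⟩,
        show n - 1 + 1 = n + (t : ℕ) by omega, fun w => ?_⟩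
      rw [ht0]
      exact root2_action hn w
    · set t' : Fin n := ⟨(t : ℕ) - 1, by omega⟩ with ht'def
      have hvr : ((t.rev : Fin n) : ℕ) = n - ((t : ℕ) + 1) := Fin.val_rev t
      have hvr' : ((t'.rev : Fin n) : ℕ) = n - ((t : ℕ) - 1 + 1) := Fin.val_rev t'
      refine ⟨root1 t.rev t'.rev,
        root1_mem _ _ (by omega),
        root1_sq _ _ (fun h => by
          have := congrArg Fin.val h
          rw [hvr, hvr'] at this
          omega),
        Sum.inr t',
        show n + ((t : ℕ) - 1) + 1 = n + (t : ℕ) by omega,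
        fun w => ?_⟩
      have := (root1_action t.rev t'.rev w).2
      rwa [Fin.rev_rev, Fin.rev_rev] at this

lemma tri_sp_mem_uSet {G : Mat2n n} (hsp : Gᵀ * sympForm n * G = sympForm n)
    (htri : ∀ p q, idx n q < idx n p → G p q = 0) : G ∈ uSet n := by
  set x := G.toBlocks₁₁ with hxdef
  set y := G.toBlocks₁₂ with hydef
  set z := G.toBlocks₂₂ with hzdef
  have hC : G.toBlocks₂₁ = 0 := by
    ext a b
    have hb := b.isLt
    exact htri _ _ (show idx n (Sum.inl b) < idx n (Sum.inr a) by
      simp only [idx, Sum.elim_inl, Sum.elim_inr]; omega)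
  have hGb : G = fromBlocks x y 0 z := by
    rw [hxdef, hydef, hzdef, ← hC]
    exact (fromBlocks_toBlocks G).symm
  have hxtri : ∀ i j : Fin n, (j : ℕ) < (i : ℕ) → x i j = 0 := fun i j h =>
    htri _ _ (show idx n (Sum.inl j) < idx n (Sum.inl i) from h)
  rw [hGb] at hsp
  unfold sympForm at hsp
  rw [fromBlocks_transpose, fromBlocks_multiply, fromBlocks_multiply, fromBlocks_inj] at hsp
  obtain ⟨h11, h12, h21, h22⟩ := hsp
  simp only [Matrix.mul_zero, Matrix.zero_mul, add_zero, zero_add, Matrix.transpose_zero,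
    Matrix.mul_assoc] at h12 h22
  -- h12 : xᵀ * (antidiagJ n * z) = antidiagJ n
  have hxzJ : xᵀ * (antidiagJ n * (z * antidiagJ n)) = 1 := by
    have := congrArg (fun A => A * antidiagJ n) h12
    simp only [Matrix.mul_assoc] at this
    rw [this, J_mul_J]
  have hdetT : IsUnit (xᵀ).det := Matrix.isUnit_det_of_right_inverse
    (show xᵀ * (antidiagJ n * (z * antidiagJ n)) = 1 from hxzJ)
  have hdet : IsUnit x.det := by rwa [Matrix.det_transpose] at hdetT
  have hinvT : (xᵀ)⁻¹ = antidiagJ n * (z * antidiagJ n) := Matrix.inv_eq_right_inv hxzJ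
  have hz : antidiagJ n * (xᵀ)⁻¹ * antidiagJ n = z := by
    rw [hinvT, ← Matrix.mul_assoc, J_mul_J, Matrix.one_mul, Matrix.mul_assoc, J_mul_J,
      Matrix.mul_one]
  set s : Matrix (Fin n) (Fin n) (ZMod 2) := x⁻¹ * y * antidiagJ n with hsdef
  have hsJ : s * antidiagJ n = x⁻¹ * y := by
    rw [hsdef, Matrix.mul_assoc, Matrix.mul_assoc, J_mul_J, Matrix.mul_one]
  have hy : x * s * antidiagJ n = y := by
    rw [Matrix.mul_assoc, hsJ, Matrix.mul_nonsing_inv_cancel_left _ _ hdet]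
  -- symmetry of s from h22
  have hzT : zᵀ = antidiagJ n * (x⁻¹ * antidiagJ n) := by
    rw [← hz, Matrix.transpose_mul, Matrix.transpose_mul, antidiagJ_transpose,
      ← Matrix.transpose_nonsing_inv, Matrix.transpose_transpose]
  have hterm1 : zᵀ * (antidiagJ n * y) = antidiagJ n * (s * antidiagJ n) := by
    rw [hzT]
    simp only [Matrix.mul_assoc]
    rw [J_J_cancel, hsJ]
  have hterm2 : yᵀ * (antidiagJ n * z) = antidiagJ n * (sᵀ * antidiagJ n) := by
    have e1 : yᵀ * (antidiagJ n * z) = (zᵀ * (antidiagJ n * y))ᵀ := by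
      simp only [Matrix.transpose_mul, antidiagJ_transpose, Matrix.transpose_transpose,
        Matrix.mul_assoc]
    rw [e1, hterm1]
    simp only [Matrix.transpose_mul, antidiagJ_transpose, Matrix.transpose_transpose,
      Matrix.mul_assoc]
  rw [hterm1, hterm2] at h22
  have hsym : sᵀ = s := by
    have h0 : antidiagJ n * ((s + sᵀ) * antidiagJ n) = 0 := by
      rw [Matrix.add_mul, Matrix.mul_add, h22]
    have h0' : (s + sᵀ) = 0 := by
      have := congrArg (fun A => antidiagJ n * (A * antidiagJ n)) h0
      simp only [Matrix.mul_assoc, J_mul_J, Matrix.mul_one, Matrix.mul_zero,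
        Matrix.zero_mul, J_J_cancel] at this
      exact this
    ext i j
    have := congrFun (congrFun h0' i) j
    simp only [Matrix.add_apply, Matrix.zero_apply] at this
    have hval : ∀ a b : ZMod 2, a + b = 0 → b = a := by decide
    exact hval _ _ this
  have hdiag : ∀ i, x i i = 1 := by
    intro i
    have hprod : ∏ k, x k k ≠ 0 := by
      rw [← Matrix.det_of_upperTriangular (fun a b (h : (b : Fin n) < a) => hxtri a b h)]
      exact hdet.ne_zero
    have := Finset.prod_ne_zero_iff.mp hprod i (Finset.mem_univ i)
    revert this
    generalize x i i = a
    revert a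
    decide
  exact ⟨x, ⟨hdiag, hxtri⟩, s, hsym, by rw [hGb, uBlock, hy, hz]⟩

end Chunk4

/-- For `n ≥ 2`, the subgroup `U` of `G = Sp_{2n}(𝔽₂)` consisting of the block
matrices `[[x, x·s·J], [0, J·(xᵀ)⁻¹·J]]` with `x` upper triangular unipotent and
`s` symmetric is self-normalizing in `G`, i.e. `N_G(U) = U`. -/
theorem stmt_11 (n : ℕ) (hn : 2 ≤ n) (U : Subgroup (Sp n))
    (hU : ∀ u : Sp n, u ∈ U ↔ ((u : (Mat2n n)ˣ) : Mat2n n) ∈ uSet n) :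
    Subgroup.normalizer (U : Set (Sp n)) = U := by
  refine le_antisymm ?_ Subgroup.le_normalizer
  intro g hg
  rw [Subgroup.mem_normalizer_iff] at hg
  have hn0 : 0 < n := by omega
  set G : Mat2n n := ((g : (Mat2n n)ˣ) : Mat2n n) with hGdef
  -- conjugation: for u ∈ U there is u' ∈ U with Mᵤ · G = G · Mᵤ'
  have hconj : ∀ u : Sp n, u ∈ U → ∃ u' : Sp n, u' ∈ U ∧
      ((u : (Mat2n n)ˣ) : Mat2n n) * G = G * ((u' : (Mat2n n)ˣ) : Mat2n n) := by
    intro u hu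
    refine ⟨g⁻¹ * u * g, ?_, ?_⟩
    · have hgid : g * (g⁻¹ * u * g) * g⁻¹ = u := by group
      rw [hg (g⁻¹ * u * g), hgid]
      exact hu
    · have hcoe : ((((g⁻¹ * u * g : Sp n) : (Mat2n n)ˣ)) : Mat2n n)
          = (((g : (Mat2n n)ˣ)⁻¹ : (Mat2n n)ˣ) : Mat2n n)
            * ((u : (Mat2n n)ˣ) : Mat2n n) * G := by
        rfl
      rw [hcoe, ← Matrix.mul_assoc, ← Matrix.mul_assoc, ← Units.val_mul, ← Units.val_mul,
        mul_inv_cancel, Units.val_one, Matrix.one_mul, Units.val_mul]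
  -- the canonical flag is preserved by G
  have flag : ∀ k : ℕ, ∀ v : Fin n ⊕ Fin n → ZMod 2,
      (∀ p, k ≤ idx n p → v p = 0) → ∀ p, k ≤ idx n p → (G *ᵥ v) p = 0 := by
    intro k
    induction k with
    | zero =>
      intro v hv p _
      have hv0 : v = 0 := funext fun p => hv p (Nat.zero_le _)
      rw [hv0, Matrix.mulVec_zero]
      rfl
    | succ k ih =>
      intro v hv p hp
      obtain ⟨M, hMU, hM2, q, hq, hact⟩ := root_exists hn0 p (by omega)
      have hMsp : (⟨M, M, hM2, hM2⟩ : (Mat2n n)ˣ) ∈ Sp n := by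
        show Mᵀ * sympForm n * M = sympForm n
        exact uSet_sp hMU
      set u : Sp n := ⟨⟨M, M, hM2, hM2⟩, hMsp⟩ with hudef
      have huU : u ∈ U := (hU u).mpr hMU
      obtain ⟨u', hu'U, hcomm⟩ := hconj u huU
      set M' : Mat2n n := ((u' : (Mat2n n)ˣ) : Mat2n n) with hM'def
      have hM'u : M' ∈ uSet n := (hU u').mp hu'U
      have h1 := hact (G *ᵥ v)
      have h2 : M *ᵥ (G *ᵥ v) - G *ᵥ v = G *ᵥ (M' *ᵥ v - v) := by
        rw [Matrix.mulVec_sub, Matrix.mulVec_mulVec, Matrix.mulVec_mulVec]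
        have : (M : Mat2n n) * G = G * M' := hcomm
        rw [this]
      have hW : ∀ r, k ≤ idx n r → (M' *ᵥ v - v) r = 0 := by
        intro r hr
        have hMr : (M' *ᵥ v) r = v r := by
          rw [Matrix.mulVec, dotProduct]
          rw [Finset.sum_eq_single_of_mem r (Finset.mem_univ r) ?_]
          · rw [uSet_diag hM'u r, one_mul]
          · intro sidx _ hs
            rcases Nat.lt_or_ge (idx n sidx) (idx n r) with h | h
            · rw [uSet_tri hM'u r sidx h, zero_mul]
            · have hne : idx n sidx ≠ idx n r := fun hh => hs (idx_inj hh)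
              rw [hv sidx (by omega), mul_zero]
        simp [Pi.sub_apply, hMr]
      have h3 := ih (M' *ᵥ v - v) hW q (by omega)
      rw [h2] at h1
      rw [← h1, h3]
  -- hence G is upper triangular
  have htri : ∀ p q, idx n q < idx n p → G p q = 0 := by
    intro p q h
    have hv : ∀ r, (idx n q + 1) ≤ idx n r →
        (Pi.single q 1 : (Fin n ⊕ Fin n) → ZMod 2) r = 0 := by
      intro r hr
      have hne : r ≠ q := fun hh => by subst hh; omega
      exact Pi.single_eq_of_ne hne 1
    have hcol := flag (idx n q + 1) _ hv p (by omega)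
    rw [Matrix.mulVec_single] at hcol
    simpa using hcol
  rw [hU]
  exact tri_sp_mem_uSet g.2 htri
end

section
/- Let n ≥ 2. Let Sym_n be the additive group of symmetric n × n matrices over 𝔽₂ and V the group of upper triangular unipotent n × n matrices over 𝔽₂, acting on Sym_n by x·s = x s xᵀ. Then the subgroup [Sym_n, V] of Sym_n generated by all elements x s xᵀ − s (for x ∈ V, s ∈ Sym_n) is an 𝔽₂-subspace of codimension 2; equivalently, the quotient Sym_n/[Sym_n, V] has order 4. -/
open Matrix

/-- The additive group `Sym_n` of symmetric `n × n` matrices over `𝔽₂`. -/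
def symAdd (n : ℕ) : AddSubgroup (Matrix (Fin n) (Fin n) (ZMod 2)) where
  carrier := {s | sᵀ = s}
  add_mem' := by
    intro a b ha hb
    simp only [Set.mem_setOf_eq] at *
    rw [Matrix.transpose_add, ha, hb]
  zero_mem' := by simp
  neg_mem' := by
    intro a ha
    simp only [Set.mem_setOf_eq] at *
    rw [Matrix.transpose_neg, ha]

/-- `[Sym_n, V]`: the subgroup of `Sym_n` generated by the elements
`x·s·xᵀ − s` for `x ∈ V` upper triangular unipotent and `s ∈ Sym_n`. -/
def commSymV (n : ℕ) : AddSubgroup (symAdd n) :=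
  AddSubgroup.closure
    {t : symAdd n | ∃ x ∈ uniTri n, ∃ s : symAdd n,
      (t : Matrix (Fin n) (Fin n) (ZMod 2))
        = x * (s : Matrix (Fin n) (Fin n) (ZMod 2)) * xᵀ
          - (s : Matrix (Fin n) (Fin n) (ZMod 2))}

namespace Stmt13

abbrev M2 (n : ℕ) := Matrix (Fin n) (Fin n) (ZMod 2)

def Ee {n : ℕ} (i j : Fin n) : M2 n := Matrix.single i j (1 : ZMod 2)

lemma Ee_apply {n : ℕ} (i j a b : Fin n) :
    Ee i j a b = if i = a ∧ j = b then 1 else 0 := by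
  simp [Ee, Matrix.single_apply]

lemma Ee_apply' {n : ℕ} (i j a b : Fin n) :
    Ee i j a b = if (i : ℕ) = (a : ℕ) ∧ (j : ℕ) = (b : ℕ) then 1 else 0 := by
  simp [Ee, Matrix.single_apply, Fin.ext_iff]

lemma Ee_transpose {n : ℕ} (i j : Fin n) : (Ee i j)ᵀ = Ee j i := by
  ext a b
  simp [Ee_apply, transpose_apply, and_comm]

lemma Ee_mul_same {n : ℕ} (i j k : Fin n) : Ee i j * Ee j k = Ee i k := by
  simp [Ee]

lemma Ee_mul_ne {n : ℕ} {j k : Fin n} (i l : Fin n) (h : j ≠ k) :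
    Ee i j * Ee k l = 0 := by
  simp [Ee, Matrix.single_mul_single_of_ne (1:ZMod 2) i j k h (1:ZMod 2)]

/-- Generating set, in the ambient matrix space. -/
def Gen (n : ℕ) : Set (M2 n) :=
  {m | ∃ x ∈ uniTri n, ∃ s : M2 n, sᵀ = s ∧ m = x * s * xᵀ - s}

def C (n : ℕ) : AddSubgroup (M2 n) := AddSubgroup.closure (Gen n)

lemma one_add_mem_uniTri {n : ℕ} {i j : Fin n} (hij : (i : ℕ) < (j : ℕ)) :
    (1 + Ee i j) ∈ uniTri n := by
  constructor
  · intro k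
    have : ¬ (i = k ∧ j = k) := by rintro ⟨rfl, rfl⟩; omega
    simp [Matrix.add_apply, Ee_apply, Matrix.one_apply, this]
  · intro a b hba
    have h1 : a ≠ b := by intro h; omega
    have h2 : ¬ (i = a ∧ j = b) := by rintro ⟨rfl, rfl⟩; omega
    simp [Matrix.add_apply, Ee_apply, Matrix.one_apply, h1, Ne.symm h1, h2]

lemma theta_mem {n : ℕ} {i j : Fin n} (hij : (i : ℕ) < (j : ℕ)) (s : M2 n)
    (hs : sᵀ = s) : (1 + Ee i j) * s * (1 + Ee i j)ᵀ - s ∈ C n :=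
  AddSubgroup.subset_closure ⟨1 + Ee i j, one_add_mem_uniTri hij, s, hs, rfl⟩

lemma g1_mem {n : ℕ} {i j : Fin n} (hij : (i : ℕ) < (j : ℕ)) :
    Ee i j + Ee j i + Ee i i ∈ C n := by
  have hji : j ≠ i := by intro h; omega
  have key := theta_mem hij (Ee j j) (by rw [Ee_transpose])
  have h : (1 + Ee i j) * Ee j j * (1 + Ee i j)ᵀ - Ee j j
      = Ee i j + Ee j i + Ee i i := by
    rw [transpose_add, transpose_one, Ee_transpose]
    simp only [mul_add, add_mul, one_mul, mul_one, Ee_mul_same]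
    abel
  rwa [h] at key

lemma g2_mem {n : ℕ} {i j k : Fin n} (hij : (i : ℕ) < (j : ℕ)) (hkj : k ≠ j) :
    Ee i k + Ee k i ∈ C n := by
  have hjk : j ≠ k := Ne.symm hkj
  have hsymm : (Ee k j + Ee j k)ᵀ = Ee k j + Ee j k := by
    rw [transpose_add, Ee_transpose, Ee_transpose, add_comm]
  have key := theta_mem hij (Ee k j + Ee j k) hsymm
  have h : (1 + Ee i j) * (Ee k j + Ee j k) * (1 + Ee i j)ᵀ - (Ee k j + Ee j k)
      = Ee i k + Ee k i := by
    rw [transpose_add, transpose_one, Ee_transpose]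
    simp only [mul_add, add_mul, one_mul, mul_one, Ee_mul_same,
      Ee_mul_ne _ _ hjk, Ee_mul_ne _ _ hkj, zero_mul, mul_zero, add_zero, zero_add]
    abel
  rwa [h] at key

section Rows

variable {n : ℕ} {p l : Fin n} {x : M2 n}

lemma row_last (hl : (l : ℕ) + 1 = n) (hx : x ∈ uniTri n) (j : Fin n) :
    x l j = if j = l then 1 else 0 := by
  by_cases h : j = l
  · simp [h, hx.1]
  · have : (j : ℕ) < (l : ℕ) := by have := j.isLt; omega
    simp [h, hx.2 l j this]

lemma row_p (hl : (l : ℕ) + 1 = n) (hpl : (p : ℕ) + 1 = l)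
    (hx : x ∈ uniTri n) (j : Fin n) :
    x p j = if j = p then 1 else if j = l then x p l else 0 := by
  by_cases h : j = p
  · simp [h, hx.1]
  · by_cases h2 : j = l
    · have hlp : l ≠ p := by intro hh; rw [hh] at hpl; omega
      simp [h, h2, hlp]
    · have : (j : ℕ) < (p : ℕ) := by
        have := j.isLt
        have h' : (j : ℕ) ≠ (p : ℕ) := fun hh => h (Fin.ext hh)
        have h2' : (j : ℕ) ≠ (l : ℕ) := fun hh => h2 (Fin.ext hh)
        omega
      simp [h, h2, hx.2 p j this]

lemma mul_row_last (hl : (l : ℕ) + 1 = n) (hx : x ∈ uniTri n) (M : M2 n) (b : Fin n) :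
    (x * M) l b = M l b := by
  rw [Matrix.mul_apply]
  rw [Finset.sum_eq_single l]
  · simp [row_last hl hx]
  · intro j _ hj
    simp [row_last hl hx, hj]
  · simp

lemma mul_col_last (hl : (l : ℕ) + 1 = n) (hx : x ∈ uniTri n) (M : M2 n) (a : Fin n) :
    (M * xᵀ) a l = M a l := by
  rw [Matrix.mul_apply]
  rw [Finset.sum_eq_single l]
  · simp [transpose_apply, row_last hl hx]
  · intro j _ hj
    simp [transpose_apply, row_last hl hx, hj]
  · simp

lemma mul_row_p (hl : (l : ℕ) + 1 = n) (hpl : (p : ℕ) + 1 = l)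
    (hx : x ∈ uniTri n) (M : M2 n) (b : Fin n) :
    (x * M) p b = M p b + x p l * M l b := by
  have hpl' : p ≠ l := by intro h; rw [h] at hpl; omega
  rw [Matrix.mul_apply]
  have h : ∀ j : Fin n, x p j * M j b
      = (if j = p then M j b else 0) + (if j = l then x p l * M j b else 0) := by
    intro j
    rw [row_p hl hpl hx]
    by_cases h : j = p
    · simp [h, hpl']
    · by_cases h2 : j = l <;> simp [h, h2, Ne.symm hpl']
  rw [Finset.sum_congr rfl fun j _ => h j, Finset.sum_add_distrib]
  simp

lemma mul_col_p (hl : (l : ℕ) + 1 = n) (hpl : (p : ℕ) + 1 = l)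
    (hx : x ∈ uniTri n) (M : M2 n) (a : Fin n) :
    (M * xᵀ) a p = M a p + M a l * x p l := by
  have hpl' : p ≠ l := by intro h; rw [h] at hpl; omega
  rw [Matrix.mul_apply]
  have h : ∀ j : Fin n, M a j * xᵀ j p
      = (if j = p then M a j else 0) + (if j = l then M a j * x p l else 0) := by
    intro j
    rw [transpose_apply, row_p hl hpl hx]
    by_cases h : j = p
    · simp [h, hpl']
    · by_cases h2 : j = l <;> simp [h, h2, Ne.symm hpl']
  rw [Finset.sum_congr rfl fun j _ => h j, Finset.sum_add_distrib]
  simp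

/-- The two invariant functionals. -/
def psi (n : ℕ) (p l : Fin n) : M2 n →+ ZMod 2 × ZMod 2 where
  toFun m := (m l l, m p p + m p l)
  map_zero' := by simp
  map_add' a b := by
    simp only [Matrix.add_apply, Prod.mk_add_mk, Prod.mk.injEq]
    exact ⟨trivial, by ring⟩

lemma psi_gen (hl : (l : ℕ) + 1 = n) (hpl : (p : ℕ) + 1 = l)
    (hx : x ∈ uniTri n) (s : M2 n) (hs : sᵀ = s) :
    psi n p l (x * s * xᵀ - s) = 0 := by
  have h1 : (x * s * xᵀ) l l = s l l := by
    rw [mul_col_last hl hx, mul_row_last hl hx]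
  have h2 : (x * s * xᵀ) p p = (s p p + x p l * s l p)
      + (s p l + x p l * s l l) * x p l := by
    rw [mul_col_p hl hpl hx, mul_row_p hl hpl hx, mul_row_p hl hpl hx]
  have h3 : (x * s * xᵀ) p l = s p l + x p l * s l l := by
    rw [mul_col_last hl hx, mul_row_p hl hpl hx]
  have hslp : s l p = s p l := by
    conv_lhs => rw [← hs, transpose_apply]
  simp only [psi, AddMonoidHom.coe_mk, ZeroHom.coe_mk, Matrix.sub_apply,
    h1, h2, h3, hslp, Prod.mk.injEq, Prod.mk_eq_zero]
  constructor
  · ring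
  · generalize s p p = A; generalize s p l = B
    generalize x p l = a; generalize s l l = c
    revert A B a c; decide

end Rows

lemma smul_mem_C {n : ℕ} (c : ZMod 2) {t : M2 n} (ht : t ∈ C n) : c • t ∈ C n := by
  fin_cases c
  · show (0 : ZMod 2) • t ∈ C n
    simpa using (C n).zero_mem
  · show (1 : ZMod 2) • t ∈ C n
    simpa using ht

lemma add_self_M2 {n : ℕ} (m : M2 n) : m + m = 0 := by
  ext a b
  simp only [Matrix.add_apply, Matrix.zero_apply]
  generalize m a b = c; revert c; decide

lemma pair_ne {n : ℕ} {i j a b : Fin n}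
    (h : ((i, j) : Fin n × Fin n) ≠ (a, b)) :
    ¬((i : ℕ) = (a : ℕ) ∧ (j : ℕ) = (b : ℕ)) := by
  rintro ⟨h1, h2⟩
  exact h (Prod.ext (Fin.ext h1) (Fin.ext h2))

lemma diag_mem {n : ℕ} {i : Fin n} {p l : Fin n} (hl : (l : ℕ) + 1 = n)
    (hpl : (p : ℕ) + 1 = l) (hip : (i : ℕ) < (p : ℕ)) : Ee i i ∈ C n := by
  have hipl : (i : ℕ) < (l : ℕ) := by omega
  have h1 : Ee i p + Ee p i + Ee i i ∈ C n := g1_mem hip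
  have h2 : Ee i p + Ee p i ∈ C n :=
    g2_mem hipl (by intro h; rw [h] at hpl; omega)
  have h3 := (C n).add_mem h1 h2
  have he : (Ee i p + Ee p i + Ee i i) + (Ee i p + Ee p i)
      = Ee i i + ((Ee i p + Ee p i) + (Ee i p + Ee p i)) := by abel
  rwa [he, add_self_M2, add_zero] at h3

set_option linter.unreachableTactic false in
set_option linter.unusedTactic false in
set_option linter.unnecessarySeqFocus false in
lemma span_mem {n : ℕ} {p l : Fin n} (hl : (l : ℕ) + 1 = n)
    (hpl : (p : ℕ) + 1 = l) {s : M2 n} (hs : sᵀ = s)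
    (h1 : s l l = 0) (h2 : s p p = s p l) : s ∈ C n := by
  classical
  have hsym : ∀ a b : Fin n, s b a = s a b := by
    intro a b; conv_lhs => rw [← hs, transpose_apply]
  set F : Fin n × Fin n → M2 n := fun q =>
    if (q.1 : ℕ) < (q.2 : ℕ) then
      (if q.1 = p ∧ q.2 = l then s p l • (Ee p l + Ee l p + Ee p p)
       else s q.1 q.2 • (Ee q.1 q.2 + Ee q.2 q.1))
    else if q.1 = q.2 ∧ (q.1 : ℕ) < (p : ℕ) then s q.1 q.1 • Ee q.1 q.1
    else 0
    with hF
  have hmem : ∀ q : Fin n × Fin n, F q ∈ C n := by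
    rintro ⟨i, j⟩
    dsimp only [F]
    split_ifs with hlt hsp hdg
    · exact smul_mem_C _ (g1_mem (by omega))
    · refine smul_mem_C _ ?_
      by_cases hjl : j = l
      · subst hjl
        have hipn : (i : ℕ) < (p : ℕ) := by
          rcases not_and_or.mp hsp with h | h
          · have : (i : ℕ) ≠ (p : ℕ) := fun hh => h (Fin.ext hh)
            omega
          · exact absurd rfl h
        exact g2_mem hipn (by intro h; rw [h] at hpl; omega)
      · have hjl' : (j : ℕ) < (l : ℕ) := by
          have h3 := j.isLt
          have h4 : (j : ℕ) ≠ (l : ℕ) := fun hh => hjl (Fin.ext hh)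
          omega
        exact g2_mem (show (i : ℕ) < (l : ℕ) by omega) hjl
    · exact smul_mem_C _ (diag_mem hl hpl hdg.2)
    · exact (C n).zero_mem
  have hsum : ∑ q : Fin n × Fin n, F q = s := by
    ext a b
    rw [Matrix.sum_apply]
    rcases lt_trichotomy (a : ℕ) (b : ℕ) with hab | hab | hab
    · rw [Finset.sum_eq_single (a, b)]
      · dsimp only [F]
        rw [if_pos hab]
        by_cases hsp : a = p ∧ b = l
        · obtain ⟨rfl, rfl⟩ := hsp
          simp only [Matrix.smul_apply, Matrix.add_apply, Ee_apply', eq_self_iff_true, true_and, and_true, if_true]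
          first | (split_ifs <;> (first | (exfalso; omega) | simp [h1, h2, hsym])) | simp [h1, h2, hsym]
        · rw [if_neg hsp]
          simp only [Matrix.smul_apply, Matrix.add_apply, Ee_apply', eq_self_iff_true, true_and, and_true, if_true]
          first | (split_ifs <;> (first | (exfalso; omega) | simp [h1, h2, hsym])) | simp [h1, h2, hsym]
      · rintro ⟨i, j⟩ - hne
        have hne' := pair_ne hne
        dsimp only [F]
        split_ifs with hlt hsp hdg
        · obtain ⟨rfl, rfl⟩ := hsp
          simp only [Matrix.smul_apply, Matrix.add_apply, Ee_apply', eq_self_iff_true, true_and, and_true, if_true]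
          first | (split_ifs <;> (first | (exfalso; omega) | simp)) | simp
        · simp only [Matrix.smul_apply, Matrix.add_apply, Ee_apply', eq_self_iff_true, true_and, and_true, if_true]
          first | (split_ifs <;> (first | (exfalso; omega) | simp)) | simp
        · obtain ⟨rfl, hip⟩ := hdg
          simp only [Matrix.smul_apply, Ee_apply', eq_self_iff_true, true_and, and_true, if_true]
          first | (split_ifs <;> (first | (exfalso; omega) | simp)) | simp
        · simp
      · intro h; exact absurd (Finset.mem_univ _) h
    · -- a = b
      have hab' : a = b := Fin.ext hab
      subst hab'
      rcases lt_trichotomy (a : ℕ) (p : ℕ) with hap | hap | hap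
      · rw [Finset.sum_eq_single (a, a)]
        · dsimp only [F]
          rw [if_neg (by omega), if_pos ⟨rfl, hap⟩]
          simp only [Matrix.smul_apply, Ee_apply', eq_self_iff_true, true_and, and_true, if_true]
          first | (split_ifs <;> (first | (exfalso; omega) | simp)) | simp
        · rintro ⟨i, j⟩ - hne
          have hne' := pair_ne hne
          dsimp only [F]
          split_ifs with hlt hsp hdg
          · obtain ⟨rfl, rfl⟩ := hsp
            simp only [Matrix.smul_apply, Matrix.add_apply, Ee_apply', eq_self_iff_true, true_and, and_true, if_true]
            first | (split_ifs <;> (first | (exfalso; omega) | simp)) | simp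
          · simp only [Matrix.smul_apply, Matrix.add_apply, Ee_apply', eq_self_iff_true, true_and, and_true, if_true]
            first | (split_ifs <;> (first | (exfalso; omega) | simp)) | simp
          · obtain ⟨rfl, hip⟩ := hdg
            simp only [Matrix.smul_apply, Ee_apply', eq_self_iff_true, true_and, and_true, if_true]
            first | (split_ifs <;> (first | (exfalso; omega) | simp)) | simp
          · simp
        · intro h; exact absurd (Finset.mem_univ _) h
      · -- a = p
        have hap' : a = p := Fin.ext hap
        subst hap'
        rw [Finset.sum_eq_single (a, l)]
        · dsimp only [F]
          have hal' : (a : ℕ) < (l : ℕ) := by omega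
          rw [if_pos hal', if_pos ⟨rfl, rfl⟩]
          simp only [Matrix.smul_apply, Matrix.add_apply, Ee_apply', eq_self_iff_true, true_and, and_true, if_true]
          first | (split_ifs <;> (first | (exfalso; omega) | simp [h2, hsym])) | simp [h2, hsym]
        · rintro ⟨i, j⟩ - hne
          have hne' := pair_ne hne
          dsimp only [F]
          split_ifs with hlt hsp hdg
          · exact absurd (Prod.ext hsp.1 hsp.2) hne
          · simp only [Matrix.smul_apply, Matrix.add_apply, Ee_apply', eq_self_iff_true, true_and, and_true, if_true]
            first | (split_ifs <;> (first | (exfalso; omega) | simp)) | simp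
          · obtain ⟨rfl, hip⟩ := hdg
            simp only [Matrix.smul_apply, Ee_apply', eq_self_iff_true, true_and, and_true, if_true]
            first | (split_ifs <;> (first | (exfalso; omega) | simp)) | simp
          · simp
        · intro h; exact absurd (Finset.mem_univ _) h
      · -- a = l
        have hal : a = l := by
          have h5 := a.isLt
          exact Fin.ext (by omega)
        subst hal
        rw [Finset.sum_eq_zero, h1]
        rintro ⟨i, j⟩ -
        dsimp only [F]
        split_ifs with hlt hsp hdg
        · obtain ⟨rfl, rfl⟩ := hsp
          simp only [Matrix.smul_apply, Matrix.add_apply, Ee_apply', eq_self_iff_true, true_and, and_true, if_true]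
          first | (split_ifs <;> (first | (exfalso; omega) | simp)) | simp
        · simp only [Matrix.smul_apply, Matrix.add_apply, Ee_apply', eq_self_iff_true, true_and, and_true, if_true]
          first | (split_ifs <;> (first | (exfalso; omega) | simp)) | simp
        · obtain ⟨rfl, hip⟩ := hdg
          simp only [Matrix.smul_apply, Ee_apply', eq_self_iff_true, true_and, and_true, if_true]
          first | (split_ifs <;> (first | (exfalso; omega) | simp)) | simp
        · simp
    · -- b < a
      rw [Finset.sum_eq_single (b, a)]
      · dsimp only [F]
        rw [if_pos hab]
        by_cases hsp : b = p ∧ a = l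
        · obtain ⟨rfl, rfl⟩ := hsp
          simp only [Matrix.smul_apply, Matrix.add_apply, Ee_apply', eq_self_iff_true, true_and, and_true, if_true]
          first | (split_ifs <;> (first | (exfalso; omega) | simp [hsym])) | simp [hsym]
        · rw [if_neg hsp]
          simp only [Matrix.smul_apply, Matrix.add_apply, Ee_apply', eq_self_iff_true, true_and, and_true, if_true]
          first | (split_ifs <;> (first | (exfalso; omega) | simp [hsym])) | simp [hsym]
      · rintro ⟨i, j⟩ - hne
        have hne' := pair_ne hne
        dsimp only [F]
        split_ifs with hlt hsp hdg
        · obtain ⟨rfl, rfl⟩ := hsp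
          simp only [Matrix.smul_apply, Matrix.add_apply, Ee_apply', eq_self_iff_true, true_and, and_true, if_true]
          first | (split_ifs <;> (first | (exfalso; omega) | simp)) | simp
        · simp only [Matrix.smul_apply, Matrix.add_apply, Ee_apply', eq_self_iff_true, true_and, and_true, if_true]
          first | (split_ifs <;> (first | (exfalso; omega) | simp)) | simp
        · obtain ⟨rfl, hip⟩ := hdg
          simp only [Matrix.smul_apply, Ee_apply', eq_self_iff_true, true_and, and_true, if_true]
          first | (split_ifs <;> (first | (exfalso; omega) | simp)) | simp
        · simp
      · intro h; exact absurd (Finset.mem_univ _) h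
  rw [← hsum]
  exact AddSubgroup.sum_mem _ fun q _ => hmem q

end Stmt13

open Stmt13 in
/-- For `n ≥ 2`, the subgroup `[Sym_n, V]` of the symmetric matrices generated by
the `x s xᵀ − s` (`x ∈ V`, `s ∈ Sym_n`) has index `4`, i.e. is an `𝔽₂`-subspace of
codimension `2`: the quotient `Sym_n/[Sym_n, V]` has order `4`. -/
theorem stmt_13 (n : ℕ) (hn : 2 ≤ n) :
    Nat.card ((symAdd n) ⧸ commSymV n) = 4 := by
  classical
  have hn1 : n - 1 < n := by omega
  have hn2 : n - 2 < n := by omega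
  set l : Fin n := ⟨n - 1, hn1⟩ with hl_def
  set p : Fin n := ⟨n - 2, hn2⟩ with hp_def
  have hl : (l : ℕ) + 1 = n := by simp [hl_def]; omega
  have hpl : (p : ℕ) + 1 = (l : ℕ) := by simp [hp_def, hl_def]; omega
  set Φ : symAdd n →+ ZMod 2 × ZMod 2 := (psi n p l).comp (symAdd n).subtype with hΦ
  have hker : commSymV n = Φ.ker := by
    apply le_antisymm
    · rw [commSymV]
      rw [AddSubgroup.closure_le]
      rintro t ⟨x, hx, s, hts⟩
      have hst : (s : M2 n)ᵀ = s := s.2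
      have h0 : Φ t = 0 := by
        simp only [hΦ, AddMonoidHom.comp_apply, AddSubgroup.coe_subtype]
        rw [hts]
        exact psi_gen hl hpl hx _ hst
      exact h0
    · intro t ht
      have h0 : psi n p l (t : M2 n) = 0 := ht
      have h1 : (t : M2 n) l l = 0 := congrArg Prod.fst h0
      have h2' : (t : M2 n) p p + (t : M2 n) p l = 0 := congrArg Prod.snd h0
      have h2 : (t : M2 n) p p = (t : M2 n) p l := by
        have key : ∀ a b : ZMod 2, a + b = 0 → a = b := by decide
        exact key _ _ h2'
      have hmemC : (t : M2 n) ∈ C n := span_mem hl hpl t.2 h1 h2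
      have hmap : C n ≤ (commSymV n).map (symAdd n).subtype := by
        rw [C, AddSubgroup.closure_le]
        rintro m ⟨x, hx, s, hs, rfl⟩
        have hmsym : (x * s * xᵀ - s)ᵀ = x * s * xᵀ - s := by
          rw [transpose_sub, transpose_mul, transpose_mul, transpose_transpose,
            hs, Matrix.mul_assoc]
        refine ⟨⟨x * s * xᵀ - s, hmsym⟩, ?_, rfl⟩
        exact AddSubgroup.subset_closure ⟨x, hx, ⟨s, hs⟩, rfl⟩
      obtain ⟨u, hu, huv⟩ := hmap hmemC
      have heq : u = t := Subtype.ext huv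
      rwa [← heq]
  have hsurj : Function.Surjective Φ := by
    rintro ⟨c1, c2⟩
    have hplne : (p : ℕ) ≠ (l : ℕ) := by omega
    have hsymmem : (c1 • Ee l l + c2 • Ee p p : M2 n) ∈ symAdd n := by
      show (c1 • Ee l l + c2 • Ee p p : M2 n)ᵀ = _
      rw [transpose_add, transpose_smul, transpose_smul, Ee_transpose, Ee_transpose]
    refine ⟨⟨c1 • Ee l l + c2 • Ee p p, hsymmem⟩, ?_⟩
    simp only [hΦ, AddMonoidHom.comp_apply, AddSubgroup.coe_subtype, psi,
      AddMonoidHom.coe_mk, ZeroHom.coe_mk, Matrix.add_apply, Matrix.smul_apply,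
      Ee_apply', eq_self_iff_true, true_and, and_true, if_true]
    have e1 : n - 2 ≠ n - 1 := by omega
    have e2 : n - 1 ≠ n - 2 := by omega
    simp [e1, e2, hplne, Ne.symm hplne, smul_eq_mul]
  rw [hker]
  rw [Nat.card_congr (QuotientAddGroup.quotientKerEquivOfSurjective Φ hsurj).toEquiv]
  simp [Nat.card_eq_fintype_card]
end
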